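/- arXiv:1404.0496 — 6 statements merged into one kernel-verified Lean document; each statement's English description precedes it below -/
import Mathlib

section
/- Let G be a 2-connected finite simple graph with minimum degree δ, and let p be the number of vertices of a longest path in G. If p ≤ 2δ, then the circumference c of G satisfies c ≥ p (and consequently c = p = n, i.e., G is Hamiltonian). -/
open SimpleGraph Walk

section Aux
variable {V : Type*} [DecidableEq V] {G : SimpleGraph V}


lemma aux_support_getElem {u v : V} (p : G.Walk u v) :
    ∀ (i : ℕ) (h : i < p.support.length), p.support[i] = p.getVert i := by
  induction p with
  | nil => intro i h; simp [Walk.support_nil] at h; subst h; simp [Walk.support_nil]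
  | cons hadj q ih =>
    intro i h
    cases i with
    | zero => simp
    | succ n =>
      simp only [Walk.support_cons, List.getElem_cons_succ, Walk.getVert_cons_succ]
      exact ih n (by simpa [Walk.support_cons] using h)

lemma aux_getVert_inj {u v : V} {p : G.Walk u v} (hp : p.IsPath) {i j : ℕ}
    (hi : i ≤ p.length) (hj : j ≤ p.length) (h : p.getVert i = p.getVert j) : i = j := by
  have hl : p.support.length = p.length + 1 := p.length_support
  have h1 : p.support[i]'(by omega) = p.support[j]'(by omega) := by
    rw [aux_support_getElem p i (by omega), aux_support_getElem p j (by omega)]; exact h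
  exact hp.support_nodup.getElem_inj_iff.mp h1




lemma aux_getVert_dropUntil {u v x : V} (p : G.Walk u v) (hx : x ∈ p.support) (j : ℕ) :
    (p.dropUntil x hx).getVert j = p.getVert ((p.takeUntil x hx).length + j) := by
  have h := congrArg (fun w => Walk.getVert w ((p.takeUntil x hx).length + j)) (p.take_spec hx)
  simp only [Walk.getVert_append] at h
  simpa using h

lemma aux_length_takeUntil {u v : V} {p : G.Walk u v} (hp : p.IsPath) {i : ℕ}
    (hi : i ≤ p.length) (hmem : p.getVert i ∈ p.support) :
    (p.takeUntil (p.getVert i) hmem).length = i := by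
  have ht := p.length_takeUntil_le hmem
  have h0 : (p.dropUntil _ hmem).getVert 0 = p.getVert i := Walk.getVert_zero _
  rw [aux_getVert_dropUntil] at h0
  exact aux_getVert_inj hp (by omega) hi (by simpa using h0)



lemma aux_isCycle_of_nodup {u : V} (C : G.Walk u u) (hn : C.support.tail.Nodup)
    (h3 : 3 ≤ C.length) : C.IsCycle := by
  cases C with
  | nil => simp at h3
  | @cons _ w _ h Q =>
    rw [Walk.cons_isCycle_iff]
    have hQ : Q.IsPath := Walk.IsPath.mk' (by simpa using hn)
    refine ⟨hQ, fun hmem => ?_⟩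
    have hlen : 2 ≤ Q.length := by simp at h3; omega
    cases Q with
    | nil => simp at hlen
    | @cons _ w' _ h' Q' =>
      simp only [Walk.edges_cons, List.mem_cons] at hmem
      rcases hmem with heq | hmem
      · rw [Sym2.eq_iff] at heq
        rcases heq with ⟨rfl, -⟩ | ⟨rfl, -⟩
        · exact G.irrefl h
        · -- Q' : Walk u u is a path, so nil, so Q.length = 1
          have : Q' = Walk.nil := Walk.isPath_iff_eq_nil.mp (Walk.cons_isPath_iff _ _ |>.mp hQ).1
          subst this; simp at hlen
      · have hw : w ∈ Q'.support := Walk.snd_mem_support_of_mem_edges _ hmem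
        exact ((Walk.cons_isPath_iff _ _).mp hQ).2 hw



lemma aux_first_hit {z u : V} (Q : G.Walk z u) (S : Set V) (hz : z ∉ S) (hu : u ∈ S) :
    ∃ w, w ∈ S ∧ ∃ Q' : G.Walk z w, ∀ x ∈ Q'.support, x ∈ S → x = w := by
  classical
  induction Q with
  | nil => exact absurd hu hz
  | @cons a b c h Q ih =>
    by_cases hb : b ∈ S
    · refine ⟨b, hb, Walk.cons h Walk.nil, ?_⟩
      intro x hx hxS
      simp only [Walk.support_cons, Walk.support_nil, List.mem_cons, List.mem_singleton] at hx
      rcases hx with rfl | rfl | h'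
      · exact absurd hxS hz
      · rfl
      · simp at h'
    · obtain ⟨w, hwS, Q', hQ'⟩ := ih hb hu
      refine ⟨w, hwS, Walk.cons h Q', ?_⟩
      intro x hx hxS
      simp only [Walk.support_cons, List.mem_cons] at hx
      rcases hx with rfl | hx
      · exact absurd hxS hz
      · exact hQ' x hx hxS



lemma aux_exists_adj {α : Type*} {G' : SimpleGraph α} {a b : α} (W : G'.Walk a b) (hne : a ≠ b) :
    ∃ y, G'.Adj a y := by
  cases W with
  | nil => exact absurd rfl hne
  | cons h _ => exact ⟨_, h⟩

lemma aux_preconnected [Fintype V] (hcard : 3 ≤ Fintype.card V)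
    (h2 : ∀ v : V, (G.induce ({v}ᶜ : Set V)).Connected) : G.Preconnected := by
  intro a b
  rcases eq_or_ne a b with rfl | hab
  · rfl
  · have h2' : (({a, b} : Finset V) : Finset V).card ≤ 2 := by
      apply le_trans (Finset.card_insert_le _ _); simp
    have : ∃ c, c ≠ a ∧ c ≠ b := by
      by_contra hcon
      push_neg at hcon
      have hsub : (Finset.univ : Finset V) ⊆ {a, b} := by
        intro z _
        rcases eq_or_ne z a with rfl | hz
        · simp
        · simp [hcon z hz]
      have := Finset.card_le_card hsub
      rw [Finset.card_univ] at this
      omega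
    obtain ⟨c, hca, hcb⟩ := this
    have ha : a ∈ ({c}ᶜ : Set V) := by simp [hca.symm]
    have hb : b ∈ ({c}ᶜ : Set V) := by simp [hcb.symm]
    have hr := (h2 c).preconnected ⟨a, ha⟩ ⟨b, hb⟩
    exact hr.map (SimpleGraph.Embedding.induce ({c}ᶜ : Set V)).toHom

lemma aux_two_le_minDegree [Fintype V] [DecidableRel G.Adj]
    (hcard : 3 ≤ Fintype.card V)
    (h2 : ∀ v : V, (G.induce ({v}ᶜ : Set V)).Connected) : 2 ≤ G.minDegree := by
  by_contra hlt
  push_neg at hlt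
  have : Nonempty V := Fintype.card_pos_iff.mp (by omega)
  obtain ⟨u, hu⟩ := G.exists_minimal_degree_vertex
  have hdeg : (G.neighborFinset u).card ≤ 1 := by
    rw [← G.card_neighborFinset_eq_degree] at hu; omega
  have hnt : Nontrivial V := Fintype.one_lt_card_iff_nontrivial.mp (by omega)
  have hW : ∃ w, w ≠ u ∧ ∀ y, G.Adj u y → y = w := by
    rcases (G.neighborFinset u).eq_empty_or_nonempty with he | ⟨w, hw⟩
    · obtain ⟨w, hw⟩ := exists_ne u
      refine ⟨w, hw, fun y hy => absurd ?_ (by simp [he] : y ∉ G.neighborFinset u)⟩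
      simpa using hy
    · refine ⟨w, fun h => G.irrefl (h ▸ (by simpa using hw : G.Adj u w)), fun y hy => ?_⟩
      have hy' : y ∈ G.neighborFinset u := by simpa using hy
      exact Finset.card_le_one.mp hdeg y hy' w hw
  obtain ⟨w, hwu, hwprop⟩ := hW
  have : ∃ z, z ≠ u ∧ z ≠ w := by
    by_contra hcon
    push_neg at hcon
    have hsub : (Finset.univ : Finset V) ⊆ {u, w} := by
      intro z _
      rcases eq_or_ne z u with rfl | hz
      · simp
      · simp [hcon z hz]
    have := Finset.card_le_card hsub
    rw [Finset.card_univ] at this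
    have : ({u, w} : Finset V).card ≤ 2 := by
      apply le_trans (Finset.card_insert_le _ _); simp
    omega
  obtain ⟨z, hzu, hzw⟩ := this
  have hu' : u ∈ ({w}ᶜ : Set V) := by simp only [Set.mem_compl_iff, Set.mem_singleton_iff]; exact Ne.symm hwu
  have hz' : z ∈ ({w}ᶜ : Set V) := by simp only [Set.mem_compl_iff, Set.mem_singleton_iff]; exact hzw
  obtain ⟨W⟩ := (h2 w).preconnected ⟨u, hu'⟩ ⟨z, hz'⟩
  obtain ⟨y, hy⟩ := aux_exists_adj W (by simp [hzu.symm])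
  have hadj : G.Adj u y.1 := hy
  have := hwprop _ hadj
  exact y.2 (by simpa using this)



lemma aux_card_indices [Fintype V] [DecidableRel G.Adj] {u v : V} (P : G.Walk u v)
    (hmem : ∀ y, G.Adj u y → y ∈ P.support) :
    G.degree u ≤ ((Finset.range P.length).filter (fun i => G.Adj u (P.getVert (i+1)))).card := by
  classical
  rw [← G.card_neighborFinset_eq_degree]
  set f : V → ℕ := fun y =>
    if h : y ∈ P.support then Classical.choose (Walk.mem_support_iff_exists_getVert.mp h) - 1
    else 0 with hf
  apply Finset.card_le_card_of_injOn f
  · intro y hy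
    have hadj : G.Adj u y := by simpa using hy
    have hsupp := hmem y hadj
    have hspec := Classical.choose_spec (Walk.mem_support_iff_exists_getVert.mp hsupp)
    set i := Classical.choose (Walk.mem_support_iff_exists_getVert.mp hsupp) with hi
    have hne0 : i ≠ 0 := by
      intro h0
      rw [h0, Walk.getVert_zero] at hspec
      exact G.ne_of_adj hadj hspec.1
    have hfy : f y = i - 1 := by rw [hf]; simp [hsupp, ← hi]
    rw [Finset.mem_coe, Finset.mem_filter, Finset.mem_range, hfy]
    constructor
    · omega
    · have : i - 1 + 1 = i := by omega
      rw [this, hspec.1]; exact hadj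
  · intro y1 h1 y2 h2 hfeq
    have hadj1 : G.Adj u y1 := by simpa using h1
    have hadj2 : G.Adj u y2 := by simpa using h2
    have hs1 := hmem y1 hadj1
    have hs2 := hmem y2 hadj2
    have hspec1 := Classical.choose_spec (Walk.mem_support_iff_exists_getVert.mp hs1)
    have hspec2 := Classical.choose_spec (Walk.mem_support_iff_exists_getVert.mp hs2)
    set i1 := Classical.choose (Walk.mem_support_iff_exists_getVert.mp hs1) with hi1
    set i2 := Classical.choose (Walk.mem_support_iff_exists_getVert.mp hs2) with hi2
    have hne1 : i1 ≠ 0 := fun h0 => by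
      rw [h0, Walk.getVert_zero] at hspec1; exact G.ne_of_adj hadj1 hspec1.1
    have hne2 : i2 ≠ 0 := fun h0 => by
      rw [h0, Walk.getVert_zero] at hspec2; exact G.ne_of_adj hadj2 hspec2.1
    have heq' : i1 - 1 = i2 - 1 := by
      have e1 : f y1 = i1 - 1 := by rw [hf]; simp [hs1, ← hi1]
      have e2 : f y2 = i2 - 1 := by rw [hf]; simp [hs2, ← hi2]
      rw [e1, e2] at hfeq
      exact hfeq
    have : i1 = i2 := by omega
    rw [← hspec1.1, ← hspec2.1, this]

lemma aux_card_indices' [Fintype V] [DecidableRel G.Adj] {u v : V} (P : G.Walk u v)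
    (hmem : ∀ y, G.Adj v y → y ∈ P.support) :
    G.degree v ≤ ((Finset.range P.length).filter (fun i => G.Adj v (P.getVert i))).card := by
  classical
  rw [← G.card_neighborFinset_eq_degree]
  set f : V → ℕ := fun y =>
    if h : y ∈ P.support then Classical.choose (Walk.mem_support_iff_exists_getVert.mp h)
    else 0 with hf
  apply Finset.card_le_card_of_injOn f
  · intro y hy
    have hadj : G.Adj v y := by simpa using hy
    have hsupp := hmem y hadj
    have hspec := Classical.choose_spec (Walk.mem_support_iff_exists_getVert.mp hsupp)
    set i := Classical.choose (Walk.mem_support_iff_exists_getVert.mp hsupp) with hi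
    have hnel : i ≠ P.length := by
      intro h0
      rw [h0, Walk.getVert_length] at hspec
      exact G.ne_of_adj hadj hspec.1
    have hfy : f y = i := by rw [hf]; simp [hsupp, ← hi]
    rw [Finset.mem_coe, Finset.mem_filter, Finset.mem_range, hfy]
    refine ⟨by omega, ?_⟩
    rw [hspec.1]; exact hadj
  · intro y1 h1 y2 h2 hfeq
    have hs1 := hmem y1 (by simpa using h1)
    have hs2 := hmem y2 (by simpa using h2)
    have hspec1 := Classical.choose_spec (Walk.mem_support_iff_exists_getVert.mp hs1)
    have hspec2 := Classical.choose_spec (Walk.mem_support_iff_exists_getVert.mp hs2)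
    have e1 : f y1 = Classical.choose (Walk.mem_support_iff_exists_getVert.mp hs1) := by
      rw [hf]; simp [hs1]
    have e2 : f y2 = Classical.choose (Walk.mem_support_iff_exists_getVert.mp hs2) := by
      rw [hf]; simp [hs2]
    rw [e1, e2] at hfeq
    rw [← hspec1.1, ← hspec2.1, hfeq]

end Aux

/-- If `G` is a 2-connected finite simple graph whose longest path
has `p` vertices and `p ≤ 2δ`, then the circumference `c` satisfies `c ≥ p`; in this
case `c = p = n` and `G` is Hamiltonian. -/
theorem stmt_0 {V : Type*} [Fintype V] [DecidableEq V] (G : SimpleGraph V) [DecidableRel G.Adj]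
    (hcard : 3 ≤ Fintype.card V)
    (h2conn : ∀ v : V, (G.induce ({v}ᶜ : Set V)).Connected)
    (p c : ℕ)
    (hp : ∃ (u v : V) (P : G.Walk u v), P.IsPath ∧ P.length + 1 = p)
    (hpmax : ∀ (u v : V) (P : G.Walk u v), P.IsPath → P.length + 1 ≤ p)
    (hc : ∃ (u : V) (C : G.Walk u u), C.IsCycle ∧ C.length = c)
    (hcmax : ∀ (u : V) (C : G.Walk u u), C.IsCycle → C.length ≤ c)
    (hple : p ≤ 2 * G.minDegree) :
    p ≤ c ∧ c = p ∧ p = Fintype.card V ∧ G.IsHamiltonian := by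
  classical
  obtain ⟨u, v, P, hP, hPlen⟩ := hp
  have hδ2 : 2 ≤ G.minDegree := aux_two_le_minDegree hcard h2conn
  -- Step A : all neighbours of the endpoints lie on P
  have hAdjU : ∀ y, G.Adj u y → y ∈ P.support := by
    intro y hy
    by_contra hns
    have hpath : (Walk.cons hy.symm P).IsPath := hP.cons hns
    have := hpmax _ _ _ hpath
    simp only [Walk.length_cons] at this
    omega
  have hAdjV : ∀ y, G.Adj v y → y ∈ P.support := by
    intro y hy
    by_contra hns
    have hns' : y ∉ P.reverse.support := by rwa [Walk.support_reverse, List.mem_reverse]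
    have hpath : (Walk.cons hy.symm P.reverse).IsPath := hP.reverse.cons hns'
    have := hpmax _ _ _ hpath
    simp only [Walk.length_cons, Walk.length_reverse] at this
    omega
  set n := P.length with hn
  -- Step B : crossing indices
  set A := (Finset.range n).filter (fun i => G.Adj u (P.getVert (i+1))) with hA_def
  set B := (Finset.range n).filter (fun i => G.Adj v (P.getVert i)) with hB_def
  have hA : G.degree u ≤ A.card := aux_card_indices P hAdjU
  have hB : G.degree v ≤ B.card := aux_card_indices' P hAdjV
  have hdu := G.minDegree_le_degree u
  have hdv := G.minDegree_le_degree v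
  have hAn : A.card ≤ n := le_trans (Finset.card_filter_le _ _) (by simp)
  have hn2 : 2 ≤ n := by omega
  have hinter : (A ∩ B).Nonempty := by
    have hsub : A ∪ B ⊆ Finset.range n := by
      intro j hj
      rcases Finset.mem_union.mp hj with h | h
      · exact Finset.mem_of_mem_filter j h
      · exact Finset.mem_of_mem_filter j h
    have hcard_un : (A ∪ B).card ≤ n := by
      have := Finset.card_le_card hsub
      simpa using this
    have hsum := Finset.card_union_add_card_inter A B
    have hpos : 0 < (A ∩ B).card := by omega
    exact Finset.card_pos.mp hpos
  obtain ⟨i, hiAB⟩ := hinter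
  have hi : i < n := Finset.mem_range.mp (Finset.mem_of_mem_filter i (Finset.mem_inter.mp hiAB).1)
  have hu_i : G.Adj u (P.getVert (i+1)) :=
    (Finset.mem_filter.mp (Finset.mem_inter.mp hiAB).1).2
  have hv_i : G.Adj v (P.getVert i) :=
    (Finset.mem_filter.mp (Finset.mem_inter.mp hiAB).2).2
  -- Step C : build the cycle
  have hxmem : P.getVert i ∈ P.support :=
    Walk.mem_support_iff_exists_getVert.mpr ⟨i, rfl, by omega⟩
  set P1 := P.takeUntil (P.getVert i) hxmem with hP1_def
  set P2 := P.dropUntil (P.getVert i) hxmem with hP2_def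
  have ht : P1.length = i := aux_length_takeUntil hP (by omega) hxmem
  have hlen2 : P1.length + P2.length = n := by
    have h := congrArg Walk.length (P.take_spec hxmem)
    rw [Walk.length_append] at h
    rw [hn]
    exact h
  have hP2nil : ¬ P2.Nil := by
    rw [Walk.nil_iff_length_eq]
    omega
  have hy1 : P2.getVert 1 = P.getVert (i+1) := by
    rw [hP2_def, aux_getVert_dropUntil]
    congr 1
    rw [← hP1_def]
    omega
  set R := P2.tail with hR_def
  have hyu : G.Adj (P2.getVert 1) u := by rw [hy1]; exact hu_i.symm
  have hxv : G.Adj (P.getVert i) v := hv_i.symm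
  set C : G.Walk u u := P1.append (Walk.cons hxv (R.reverse.append (Walk.cons hyu Walk.nil)))
    with hC_def
  have hRlen : R.length + 1 = P2.length := Walk.length_tail_add_one hP2nil
  have hClen : C.length = n + 1 := by
    rw [hC_def]
    simp only [Walk.length_append, Walk.length_cons, Walk.length_reverse, Walk.length_nil]
    omega
  have hsupP : P.support = P1.support ++ R.support := by
    conv_lhs => rw [← P.take_spec hxmem]
    rw [Walk.support_append, hR_def, Walk.support_tail_of_not_nil P2 hP2nil]
  have hPnodup : (P1.support ++ R.support).Nodup := hsupP ▸ hP.support_nodup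
  have hsupC : C.support = P1.support ++ (R.support.reverse ++ [u]) := by
    rw [hC_def]
    simp [Walk.support_append, Walk.support_reverse]
  have hCnodup : C.support.tail.Nodup := by
    rw [hsupC, P1.support_eq_cons]
    simp only [List.cons_append, List.tail_cons]
    have h1 : P1.support.Nodup := hPnodup.of_append_left
    have h2 : R.support.Nodup := hPnodup.of_append_right
    have hdisj : List.Disjoint P1.support R.support := List.disjoint_of_nodup_append hPnodup
    have hu1 : u ∈ P1.support := Walk.start_mem_support _
    have huR : u ∉ R.support := fun h => hdisj hu1 h
    have h1' := h1
    rw [P1.support_eq_cons, List.nodup_cons] at h1'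
    apply List.Nodup.append h1'.2
    · apply List.Nodup.append (List.nodup_reverse.mpr h2) (List.nodup_singleton u)
      intro a ha hb
      simp only [List.mem_singleton] at hb
      subst hb
      exact huR (List.mem_reverse.mp ha)
    · intro a ha hmem
      have haP1 : a ∈ P1.support := List.mem_of_mem_tail ha
      rcases List.mem_append.mp hmem with h | h
      · exact hdisj haP1 (List.mem_reverse.mp h)
      · simp only [List.mem_singleton] at h
        subst h
        exact h1'.1 ha
  have hCcyc : C.IsCycle := aux_isCycle_of_nodup C hCnodup (by omega)
  -- Step D : every vertex lies on C
  have hallC : ∀ z, z ∈ C.support := by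
    by_contra hcon
    push_neg at hcon
    obtain ⟨z, hz⟩ := hcon
    have hu_inC : u ∈ C.support := Walk.start_mem_support _
    obtain ⟨W⟩ := aux_preconnected hcard h2conn z u
    obtain ⟨w, hwS, Q', hQ'prop⟩ := aux_first_hit W {a | a ∈ C.support} hz hu_inC
    have hwC : w ∈ C.support := hwS
    set T := Q'.bypass with hT_def
    have hT : T.IsPath := Q'.bypass_isPath
    have hTsub : ∀ a, a ∈ T.support → a ∈ Q'.support := fun a ha => Q'.support_bypass_subset ha
    set C' := C.rotate w hwC with hC'_def
    have hC' : C'.IsCycle := hCcyc.rotate hwC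
    have hC'len : C'.length = C.length := by
      have hperm := (C.support_rotate w hwC).perm.length_eq
      rw [List.length_tail, List.length_tail, Walk.length_support, Walk.length_support] at hperm
      rw [← hC'_def] at hperm
      omega
    have hC'nil : ¬ C'.Nil := by
      rw [Walk.nil_iff_length_eq]
      have := hC'.three_le_length
      omega
    set D := C'.tail with hD_def
    have hDsup : D.support = C'.support.tail := Walk.support_tail_of_not_nil _ hC'nil
    have hDnodup : D.support.Nodup := by rw [hDsup]; exact hC'.support_nodup
    have hDsubC : ∀ a, a ∈ D.support → a ∈ C.support := by
      intro a ha
      rw [hDsup] at ha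
      exact List.mem_of_mem_tail ((C.support_rotate w hwC).perm.mem_iff.mp ha)
    set Trev := T.reverse with hTrev_def
    have hTrevpath : Trev.IsPath := hT.reverse
    have hTrevnodup := hTrevpath.support_nodup
    rw [Trev.support_eq_cons, List.nodup_cons] at hTrevnodup
    set E := D.append Trev with hE_def
    have hEpath : E.IsPath := by
      apply Walk.IsPath.mk'
      rw [hE_def, Walk.support_append]
      apply List.Nodup.append hDnodup hTrevnodup.2
      intro a ha hmem
      have haC : a ∈ C.support := hDsubC a ha
      have haT : a ∈ T.support := by
        have h' : a ∈ Trev.support := List.mem_of_mem_tail hmem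
        rwa [hTrev_def, Walk.support_reverse, List.mem_reverse] at h'
      have haw : a = w := hQ'prop a (hTsub a haT) haC
      exact hTrevnodup.1 (haw ▸ hmem)
    have hTlen : 1 ≤ T.length := by
      by_contra hl
      push_neg at hl
      have h0 : T.length = 0 := by omega
      have hgl := T.getVert_length
      rw [h0, Walk.getVert_zero] at hgl
      exact hz (by rw [hgl]; exact hwC)
    have hDlen : D.length + 1 = C'.length := Walk.length_tail_add_one hC'nil
    have hEmax := hpmax _ _ E hEpath
    rw [hE_def, Walk.length_append, hTrev_def, Walk.length_reverse] at hEmax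
    omega
  -- Step E : conclusions
  have hCmax := hcmax u C hCcyc
  have hple' : p ≤ c := by omega
  have hcle : c ≤ p := by
    obtain ⟨u0, C0, hC0, hC0len⟩ := hc
    have h3 := hC0.three_le_length
    have hnil : ¬ C0.Nil := by rw [Walk.nil_iff_length_eq]; omega
    have hpath : C0.tail.IsPath := by
      apply Walk.IsPath.mk'
      rw [Walk.support_tail_of_not_nil _ hnil]
      exact hC0.support_nodup
    have := hpmax _ _ C0.tail hpath
    have := Walk.length_tail_add_one hnil
    omega
  have hCnil : ¬ C.Nil := by rw [Walk.nil_iff_length_eq]; omega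
  have hallC' : ∀ z, z ∈ C.support.tail := by
    intro z
    have hz := hallC z
    rw [C.support_eq_cons] at hz
    rcases List.mem_cons.mp hz with rfl | hz
    · rw [← Walk.support_tail_of_not_nil _ hCnil]
      exact Walk.end_mem_support _
    · exact hz
  have hpcard : p = Fintype.card V := by
    have h1 : C.support.tail.toFinset = Finset.univ := by
      apply Finset.eq_univ_of_forall
      intro z
      rw [List.mem_toFinset]
      exact hallC' z
    have h2 : C.support.tail.toFinset.card = C.support.tail.length :=
      List.toFinset_card_of_nodup hCnodup
    have h3 : C.support.tail.length = C.length := by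
      rw [List.length_tail, C.length_support]
      simp
    rw [← Finset.card_univ, ← h1, h2, h3]
    omega
  have hham : G.IsHamiltonian := by
    intro _
    refine ⟨u, C, Walk.isHamiltonianCycle_isCycle_and_isHamiltonian_tail.mpr ⟨hCcyc, ?_⟩⟩
    have hpath : C.tail.IsPath := by
      apply Walk.IsPath.mk'
      rw [Walk.support_tail_of_not_nil _ hCnil]
      exact hCnodup
    apply hpath.isHamiltonian_of_mem
    intro w
    rw [Walk.support_tail_of_not_nil _ hCnil]
    exact hallC' w
  exact ⟨hple', le_antisymm hcle hple', hpcard, hham⟩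
end

section
/- Let G be a 2-connected finite simple graph, let p be the number of vertices of a longest path in G, and let c be the circumference of G. Then c > √(2p). -/
open SimpleGraph Walk

section Aux
variable {V : Type*} {G : SimpleGraph V}



private lemma path_closed_nil {u : V} {W : G.Walk u u} (h : W.IsPath) : W = Walk.nil := by
  cases W with
  | nil => rfl
  | cons h' W' =>
    rw [Walk.cons_isPath_iff] at h
    exact absurd W'.end_mem_support h.2

private lemma pos_length_of_ne {a b : V} (W : G.Walk a b) (hab : a ≠ b) : 1 ≤ W.length := by
  cases W with
  | nil => exact absurd rfl hab
  | cons h' W' => simp [Nat.succ_le_succ]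

private lemma length_eq_one_of_edge_mem {a b : V} {B : G.Walk b a} (hB : B.IsPath)
    (he : s(a, b) ∈ B.edges) : B.length = 1 := by
  cases B with
  | nil => simp at he
  | @cons b z a h' B' =>
    rw [Walk.edges_cons, List.mem_cons] at he
    rw [Walk.cons_isPath_iff] at hB
    rcases he with he | he
    · rw [Sym2.eq_iff] at he
      rcases he with ⟨rfl, rfl⟩ | ⟨rfl, -⟩
      · exact absurd h' G.irrefl
      · rw [path_closed_nil hB.1]
        simp
    · exact absurd (B'.snd_mem_support_of_mem_edges he) hB.2

private lemma glue_isCycle {a b : V} {A : G.Walk a b} {B : G.Walk b a}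
    (hab : a ≠ b) (hA : A.IsPath) (hB : B.IsPath)
    (hshare : ∀ t, t ∈ A.support → t ∈ B.support → t = a ∨ t = b)
    (hlen : 3 ≤ A.length + B.length) : (A.append B).IsCycle := by
  cases A with
  | nil => exact absurd rfl hab
  | @cons a y b h A' =>
    rw [Walk.cons_isPath_iff] at hA
    have hbB : b ∉ B.support.tail := by
      intro hmem
      have := hB.2  -- support nodup
      rw [B.support_eq_cons] at this
      exact (List.nodup_cons.mp this).1 hmem
    rw [Walk.cons_append]
    rw [Walk.cons_isCycle_iff]
    constructor
    · rw [Walk.isPath_def, Walk.support_append]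
      rw [List.nodup_append]
      refine ⟨hA.1.2, hB.2.sublist (List.tail_sublist _), ?_⟩
      intro t htA t' htB htt'; subst htt'
      have htA' : t ∈ (Walk.cons h A').support := by
        rw [Walk.support_cons]; exact List.mem_cons_of_mem _ htA
      have htB' : t ∈ B.support := List.mem_of_mem_tail htB
      rcases hshare t htA' htB' with rfl | rfl
      · exact hA.2 htA
      · exact hbB htB
    · rw [Walk.edges_append, List.mem_append]
      rintro (hmem | hmem)
      · exact hA.2 (A'.fst_mem_support_of_mem_edges hmem)
      · have hyB : y ∈ B.support := B.snd_mem_support_of_mem_edges hmem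
        have hyA : y ∈ (Walk.cons h A').support := by
          rw [Walk.support_cons]
          exact List.mem_cons_of_mem _ A'.start_mem_support
        rcases hshare y hyA hyB with rfl | rfl
        · exact absurd rfl h.ne
        · -- y = b, so A' : Walk b b is nil, A.length = 1, B.length ≥ 2
          have hA'nil := path_closed_nil hA.1
          subst hA'nil
          simp only [Walk.length_cons, Walk.length_nil] at hlen
          have := length_eq_one_of_edge_mem hB hmem
          omega
end Aux

section Aux2
variable {V : Type*} {G : SimpleGraph V} [DecidableEq V]

private lemma cycle_split {u w : V} {D : G.Walk u u} (hD : D.IsCycle)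
    (hw : w ∈ D.support) (hwu : w ≠ u) :
    (D.takeUntil w hw).IsPath ∧ (D.dropUntil w hw).IsPath ∧
      (∀ t, t ∈ (D.takeUntil w hw).support → t ∈ (D.dropUntil w hw).support →
        t = u ∨ t = w) := by
  set Q := D.takeUntil w hw with hQdef
  set R := D.dropUntil w hw with hRdef
  have hspec : Q.append R = D := D.take_spec hw
  have hsup : D.support = Q.support ++ R.support.tail := by
    rw [← hspec, Walk.support_append]
  have hQcons : Q.support = u :: Q.support.tail := Q.support_eq_cons
  have hRcons : R.support = w :: R.support.tail := R.support_eq_cons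
  have htail : D.support.tail = Q.support.tail ++ R.support.tail := by
    have := hsup
    rw [D.support_eq_cons, hQcons] at this
    rw [List.cons_append] at this; exact List.cons_injective this
  have hnd : (Q.support.tail ++ R.support.tail).Nodup := by
    rw [← htail]; exact hD.2
  rw [List.nodup_append] at hnd
  obtain ⟨hq, hr, hdisj⟩ := hnd
  have hwQt : w ∈ Q.support.tail := by
    have h1 := Q.end_mem_support
    rw [hQcons, List.mem_cons] at h1
    rcases h1 with h1 | h1
    · exact absurd h1 hwu
    · exact h1
  have huRt : u ∈ R.support.tail := by
    have h1 := R.end_mem_support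
    rw [hRcons, List.mem_cons] at h1
    rcases h1 with h1 | h1
    · exact absurd h1.symm hwu
    · exact h1
  refine ⟨?_, ?_, ?_⟩
  · rw [Walk.isPath_def, hQcons, List.nodup_cons]
    exact ⟨fun hmem => hdisj _ hmem _ huRt rfl, hq⟩
  · rw [Walk.isPath_def, hRcons, List.nodup_cons]
    exact ⟨fun hmem => hdisj _ hwQt _ hmem rfl, hr⟩
  · intro t htQ htR
    rw [hQcons, List.mem_cons] at htQ
    rw [hRcons, List.mem_cons] at htR
    rcases htQ with rfl | htQ
    · exact Or.inl rfl
    rcases htR with rfl | htR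
    · exact Or.inr rfl
    · exact absurd htR (fun h => hdisj _ htQ _ h rfl)

private lemma end_not_mem_takeUntil {u w x : V} {Q : G.Walk u w} (hQ : Q.IsPath)
    (hx : x ∈ Q.support) (hxw : x ≠ w) : w ∉ (Q.takeUntil x hx).support := by
  intro hmem
  have hspec : (Q.takeUntil x hx).append (Q.dropUntil x hx) = Q := Q.take_spec hx
  have hnd := hQ.2
  rw [← hspec, Walk.support_append, List.nodup_append] at hnd
  have hwD : w ∈ (Q.dropUntil x hx).support.tail := by
    have h1 := (Q.dropUntil x hx).end_mem_support
    rw [(Q.dropUntil x hx).support_eq_cons, List.mem_cons] at h1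
    rcases h1 with h1 | h1
    · exact absurd h1.symm hxw
    · exact h1
  exact hnd.2.2 _ hmem _ hwD rfl

private lemma head_not_mem_dropUntil {u w x : V} {R : G.Walk w u} (hR : R.IsPath)
    (hx : x ∈ R.support) (hxw : x ≠ w) : w ∉ (R.dropUntil x hx).support := by
  intro hmem
  have hspec : (R.takeUntil x hx).append (R.dropUntil x hx) = R := R.take_spec hx
  have hnd := hR.2
  rw [← hspec, Walk.support_append, List.nodup_append] at hnd
  have hwmem : w ∈ (R.dropUntil x hx).support.tail := by
    have h1 := (R.dropUntil x hx).support_eq_cons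
    rw [h1, List.mem_cons] at hmem
    rcases hmem with h2 | h2
    · exact absurd h2.symm hxw
    · exact h2
  exact hnd.2.2 _ (R.takeUntil x hx).start_mem_support _ hwmem rfl

private lemma exists_first_hit {y b : V} (W : G.Walk y b) (S : List V) :
    b ∈ S →
    ∃ (z : V) (F1 : G.Walk y z) (F2 : G.Walk z b), z ∈ S ∧ W = F1.append F2 ∧
      ∀ t ∈ F1.support, t ∈ S → t = z := by
  induction W with
  | nil =>
    intro hb
    exact ⟨_, Walk.nil, Walk.nil, hb, rfl, fun t ht _ => by simpa using ht⟩
  | @cons a s b h W' ih =>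
    intro hb
    by_cases hy : a ∈ S
    · exact ⟨a, Walk.nil, Walk.cons h W', hy, by simp, fun t ht _ => by simpa using ht⟩
    · obtain ⟨z, F1, F2, hz, hW, hcond⟩ := ih hb
      refine ⟨z, Walk.cons h F1, F2, hz, by rw [hW, Walk.cons_append], ?_⟩
      intro t ht hts
      rw [Walk.support_cons, List.mem_cons] at ht
      rcases ht with rfl | ht
      · exact absurd hts hy
      · exact hcond t ht hts
private lemma takeUntil_start_length {a b : V} (P : G.Walk a b) (h : a ∈ P.support) :
    (P.takeUntil a h).length = 0 := by
  cases P with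
  | nil => simp [Walk.takeUntil]
  | cons h' P' => simp [Walk.takeUntil]

private lemma takeUntil_cons_ne {a s b x : V} (h : G.Adj a s) (P' : G.Walk s b)
    (hx : x ∈ (Walk.cons h P').support) (hxa : x ≠ a) :
    ∃ hx' : x ∈ P'.support,
      (Walk.cons h P').takeUntil x hx = Walk.cons h (P'.takeUntil x hx') := by
  have hx' : x ∈ P'.support := by
    rw [Walk.support_cons, List.mem_cons] at hx
    rcases hx with rfl | hx
    · exact absurd rfl hxa
    · exact hx
  refine ⟨hx', ?_⟩
  simp only [Walk.takeUntil]
  rw [dif_neg (Ne.symm hxa)]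

-- end position: takeUntil the endpoint of a path has full length
private lemma takeUntil_end_length {a b : V} {P : G.Walk a b} (hP : P.IsPath)
    (h : b ∈ P.support) : (P.takeUntil b h).length = P.length := by
  have hspec := P.take_spec h
  have hlen : (P.takeUntil b h).length + (P.dropUntil b h).length = P.length := by
    have := congrArg Walk.length hspec
    rwa [Walk.length_append] at this
  have hdp : (P.dropUntil b h).length = 0 := by
    have := path_closed_nil (hP.dropUntil h)
    rw [this]
    rfl
  omega

-- subpath between two positions of a path
private lemma exists_subpath {a b : V} (P : G.Walk a b) (hP : P.IsPath) :
    ∀ (x : V) (hx : x ∈ P.support) (y : V) (hy : y ∈ P.support),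
      (P.takeUntil x hx).length ≤ (P.takeUntil y hy).length →
      ∃ T : G.Walk x y, T.IsPath ∧ T.support ⊆ P.support ∧
        (P.takeUntil x hx).length + T.length = (P.takeUntil y hy).length := by
  induction P with
  | nil =>
    intro x hx y hy _
    rw [Walk.mem_support_nil_iff] at hx hy
    subst hx; subst hy
    exact ⟨Walk.nil, by simp, by simp, by simp⟩
  | @cons a s b h P' ih =>
    intro x hx y hy hle
    by_cases hxa : x = a
    · subst hxa
      refine ⟨(Walk.cons h P').takeUntil y hy, hP.takeUntil hy,
        Walk.support_takeUntil_subset _ hy, ?_⟩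
      rw [takeUntil_start_length]
      omega
    · have hya : y ≠ a := by
        rintro rfl
        obtain ⟨hx', heq⟩ := takeUntil_cons_ne h P' hx hxa
        rw [takeUntil_start_length, heq] at hle
        simp at hle
      obtain ⟨hx', heqx⟩ := takeUntil_cons_ne h P' hx hxa
      obtain ⟨hy', heqy⟩ := takeUntil_cons_ne h P' hy hya
      rw [Walk.cons_isPath_iff] at hP
      rw [heqx, heqy] at hle ⊢
      simp only [Walk.length_cons] at hle
      obtain ⟨T, hT1, hT2, hT3⟩ := ih hP.1 x hx' y hy' (by omega)
      refine ⟨T, hT1, ?_, ?_⟩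
      · intro t ht
        rw [Walk.support_cons]
        exact List.mem_cons_of_mem _ (hT2 ht)
      · simp only [Walk.length_cons]
        omega
private lemma jump_core {a b : V} {P : G.Walk a b} (hP : P.IsPath) {c : ℕ} (hc : 3 ≤ c)
    (hcyc : ∀ (z : V) (D : G.Walk z z), D.IsCycle → D.length ≤ c)
    {x z : V} (hx : x ∈ P.support) (hz : z ∈ P.support)
    (W1 : G.Walk x z) (hW1 : W1.IsPath)
    (hcond : ∀ t ∈ W1.support, t ∈ P.support → t = x ∨ t = z)
    (hle : (P.takeUntil x hx).length ≤ (P.takeUntil z hz).length) :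
    (P.takeUntil z hz).length ≤ (P.takeUntil x hx).length + (c - 1) := by
  by_cases hxz : x = z
  · subst hxz
    rw [Subsingleton.elim hz hx]
    omega
  obtain ⟨T, hT1, hT2, hT3⟩ := exists_subpath P hP x hx z hz hle
  by_cases hT2' : T.length ≤ 1
  · omega
  · have hcyc1 : (T.append W1.reverse).IsCycle := by
      refine glue_isCycle hxz hT1 hW1.reverse ?_ ?_
      · intro t htT htW
        rw [Walk.support_reverse, List.mem_reverse] at htW
        exact hcond t htW (hT2 htT)
      · have := pos_length_of_ne W1 hxz
        rw [Walk.length_reverse]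
        omega
    have := hcyc x _ hcyc1
    rw [Walk.length_append, Walk.length_reverse] at this
    have := pos_length_of_ne W1 hxz
    omega

private lemma count_bound {a b : V} {P : G.Walk a b} (hP : P.IsPath) {c : ℕ} (hc : 3 ≤ c)
    (hcyc : ∀ (z : V) (D : G.Walk z z), D.IsCycle → D.length ≤ c) :
    ∀ n : ℕ, ∀ (s t : V) (W : G.Walk s t), W.IsPath → W.length = n →
      ∀ (hs : s ∈ P.support) (ht : t ∈ P.support),
      ((P.takeUntil s hs).length : ℤ) - ((P.takeUntil t ht).length : ℤ) ≤ ((c : ℤ) - 1) * n ∧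
      ((P.takeUntil t ht).length : ℤ) - ((P.takeUntil s hs).length : ℤ) ≤ ((c : ℤ) - 1) * n := by
  intro n
  induction n using Nat.strong_induction_on with
  | _ n ih =>
  intro s t W hW hlen hs ht
  cases W with
  | nil =>
    rw [Subsingleton.elim ht hs]
    have hcz : (3:ℤ) ≤ (c:ℤ) := by exact_mod_cast hc
    simp only [sub_self]
    constructor <;>
      exact mul_nonneg (by linarith) (by positivity)
  | @cons s y t h W' =>
    rw [Walk.cons_isPath_iff] at hW
    rw [Walk.length_cons] at hlen
    -- jump helper producing both directions between s and some z with an off-P connector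
    have jumps : ∀ (z : V) (hz : z ∈ P.support) (W1 : G.Walk s z), W1.IsPath →
        (∀ t' ∈ W1.support, t' ∈ P.support → t' = s ∨ t' = z) →
        ((P.takeUntil s hs).length : ℤ) - ((P.takeUntil z hz).length : ℤ) ≤ (c : ℤ) - 1 ∧
        ((P.takeUntil z hz).length : ℤ) - ((P.takeUntil s hs).length : ℤ) ≤ (c : ℤ) - 1 := by
      intro z hz W1 hW1 hcond
      rcases le_total ((P.takeUntil s hs).length) ((P.takeUntil z hz).length) with hle | hle
      · have := jump_core hP hc hcyc hs hz W1 hW1 hcond hle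
        constructor <;> omega
      · have := jump_core hP hc hcyc hz hs W1.reverse hW1.reverse (by
          intro t' ht' htP
          rw [Walk.support_reverse, List.mem_reverse] at ht'
          rcases hcond t' ht' htP with h1 | h1
          · exact Or.inr h1
          · exact Or.inl h1) hle
        constructor <;> omega
    by_cases hyP : y ∈ P.support
    · have hj := jumps y hyP (Walk.cons h Walk.nil) (by simp [h.ne]) (by
        intro t' ht' _
        simp only [Walk.support_cons, Walk.support_nil, List.mem_cons, List.mem_singleton] at ht'
        tauto)
      have hih := ih W'.length (by omega) y t W' hW.1 rfl hyP ht
      have hn : n = W'.length + 1 := by omega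
      have hmul : ((c : ℤ) - 1) * n = ((c : ℤ) - 1) * W'.length + ((c : ℤ) - 1) := by
        rw [hn]; push_cast; ring
      constructor <;> linarith [hj.1, hj.2, hih.1, hih.2]
    · obtain ⟨z, F1, F2, hz, hsplit, hcond⟩ := exists_first_hit W' P.support ht
      have hWnodup := hW.1.2
      rw [hsplit, Walk.support_append, List.nodup_append] at hWnodup
      obtain ⟨hF1nd, hF2tnd, hdisj⟩ := hWnodup
      have hF1path : F1.IsPath := Walk.IsPath.mk' hF1nd
      have hsF1 : s ∉ F1.support := by
        intro hmem
        exact hW.2 (by rw [hsplit]; exact Walk.subset_support_append_left _ _ hmem)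
      have hW1path : (Walk.cons h F1).IsPath := by
        rw [Walk.cons_isPath_iff]
        exact ⟨hF1path, hsF1⟩
      have hj := jumps z hz (Walk.cons h F1) hW1path (by
        intro t' ht' htP
        rw [Walk.support_cons, List.mem_cons] at ht'
        rcases ht' with rfl | ht'
        · exact Or.inl rfl
        · exact Or.inr (hcond t' ht' htP))
      have hF2path : F2.IsPath := by
        rw [Walk.isPath_def, F2.support_eq_cons, List.nodup_cons]
        refine ⟨fun hmem => hdisj _ F1.end_mem_support _ hmem rfl, hF2tnd⟩
      have hlensplit : W'.length = F1.length + F2.length := by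
        rw [hsplit, Walk.length_append]
      have hih := ih F2.length (by omega) z t F2 hF2path rfl hz ht
      have hn : n = F2.length + 1 + F1.length := by omega
      have hmul : ((c : ℤ) - 1) * n = ((c : ℤ) - 1) * F2.length + ((c : ℤ) - 1)
          + ((c : ℤ) - 1) * F1.length := by
        rw [hn]; push_cast; ring
      have hcz : (3:ℤ) ≤ (c:ℤ) := by exact_mod_cast hc
      have hF1nonneg : (0 : ℤ) ≤ ((c : ℤ) - 1) * F1.length :=
        mul_nonneg (by linarith) (by positivity)
      constructor <;> linarith [hj.1, hj.2, hih.1, hih.2]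
private lemma exists_avoid_path (h2 : ∀ v : V, (G.induce ({v}ᶜ : Set V)).Connected)
    {w a b : V} (ha : a ≠ w) (hb : b ≠ w) :
    ∃ W : G.Walk a b, W.IsPath ∧ w ∉ W.support := by
  have hcon := h2 w
  obtain ⟨Wi⟩ := hcon.preconnected ⟨a, by simp [ha]⟩ ⟨b, by simp [hb]⟩
  let f : G.induce ({w}ᶜ : Set V) →g G := ⟨Subtype.val, fun {x y} h => h⟩
  refine ⟨(Wi.map f).bypass, Walk.bypass_isPath _, fun hmem => ?_⟩
  have hsub := Walk.support_bypass_subset _ hmem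
  rw [Walk.support_map] at hsub
  obtain ⟨⟨t, ht⟩, _, htw⟩ := List.mem_map.mp hsub
  exact ht htw

private lemma exists_other_neighbor [Fintype V] (hcard : 3 ≤ Fintype.card V)
    (h2 : ∀ v : V, (G.induce ({v}ᶜ : Set V)).Connected)
    {u v : V} (huv : u ≠ v) : ∃ x, G.Adj u x ∧ x ≠ v := by
  obtain ⟨w, hwu, hwv⟩ : ∃ w : V, w ≠ u ∧ w ≠ v := by
    by_contra hcon
    push_neg at hcon
    have hsub : (Finset.univ : Finset V) ⊆ {u, v} := by
      intro t _
      rcases em (t = u) with rfl | htu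
      · simp
      · simp [hcon t htu]
    have := Finset.card_le_card hsub
    have h2' : ({u, v} : Finset V).card ≤ 2 := Finset.card_insert_le _ _ |>.trans (by simp)
    rw [Finset.card_univ] at this
    omega
  obtain ⟨Wi⟩ := (h2 v).preconnected ⟨u, by simp [huv]⟩ ⟨w, by simp [hwv]⟩
  cases Wi with
  | nil => exact absurd rfl hwu
  | @cons _ x _ hadj W' =>
    exact ⟨x.val, hadj, Set.mem_compl_singleton_iff.mp x.prop⟩

private lemma common_cycle [Fintype V] (hcard : 3 ≤ Fintype.card V)
    (h2 : ∀ v : V, (G.induce ({v}ᶜ : Set V)).Connected) :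
    ∀ n : ℕ, 1 ≤ n → ∀ (u v : V) (F : G.Walk u v), F.IsPath → F.length = n →
      ∃ D : G.Walk u u, D.IsCycle ∧ v ∈ D.support := by
  intro n
  induction n using Nat.strong_induction_on with
  | _ n ih =>
  intro hn u v F hF hlen
  have huv : u ≠ v := by
    rintro rfl
    rw [path_closed_nil hF] at hlen
    simp at hlen
    omega
  rcases eq_or_lt_of_le hn with hn1 | hn2
  · -- base case : length 1, so u ~ v
    have hadj : G.Adj u v := by
      cases F with
      | nil => exact absurd rfl huv
      | cons h' F' =>
        cases F' with
        | nil => exact h'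
        | cons h'' F'' =>
          rw [Walk.length_cons, Walk.length_cons] at hlen
          omega
    obtain ⟨x, hux, hxv⟩ := exists_other_neighbor hcard h2 huv
    obtain ⟨W2, hW2p, hW2u⟩ := exists_avoid_path h2 (w := u) hux.ne' (Ne.symm huv)
    have hApath : (Walk.cons hadj (Walk.nil : G.Walk v v)).IsPath := by
      rw [Walk.cons_isPath_iff]
      simp [huv]
    have hBpath : (Walk.cons hux W2).reverse.IsPath := by
      refine Walk.IsPath.reverse ?_
      rw [Walk.cons_isPath_iff]
      exact ⟨hW2p, hW2u⟩
    have hW2len : 1 ≤ W2.length := pos_length_of_ne W2 hxv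
    have hshare : ∀ t, t ∈ (Walk.cons hadj (Walk.nil : G.Walk v v)).support →
        t ∈ (Walk.cons hux W2).reverse.support → t = u ∨ t = v := by
      intro t htA _
      simpa using htA
    have hlen3 : 3 ≤ (Walk.cons hadj (Walk.nil : G.Walk v v)).length +
        (Walk.cons hux W2).reverse.length := by
      rw [Walk.length_reverse]
      simp only [Walk.length_cons, Walk.length_nil]
      omega
    refine ⟨_, glue_isCycle huv hApath hBpath hshare hlen3, ?_⟩
    rw [Walk.mem_support_append_iff]
    left
    simp
  · -- inductive step
    obtain ⟨w, hvw, W0, hrev⟩ := Walk.exists_eq_cons_of_ne (Ne.symm huv) F.reverse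
    have hW0 : W0.IsPath ∧ v ∉ W0.support := by
      have := hF.reverse
      rw [hrev, Walk.cons_isPath_iff] at this
      exact this
    have hW0len : W0.length = n - 1 := by
      have h1 : F.reverse.length = n := by rw [Walk.length_reverse]; exact hlen
      rw [hrev, Walk.length_cons] at h1
      omega
    have hwv : w ≠ v := hvw.ne'
    have hwu : w ≠ u := by
      rintro rfl
      have := path_closed_nil hW0.1
      rw [this] at hW0len
      simp at hW0len
      omega
    obtain ⟨D0, hD0, hwD0⟩ := ih (n-1) (by omega) (by omega) u w W0.reverse
      hW0.1.reverse (by rw [Walk.length_reverse]; exact hW0len)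
    by_cases hvD : v ∈ D0.support
    · exact ⟨D0, hD0, hvD⟩
    obtain ⟨F2, hF2p, hF2w⟩ := exists_avoid_path h2 (w := w) hvw.ne (Ne.symm hwu)
    obtain ⟨x, F1, F2', hxD0, hsplit, hcond⟩ :=
      exists_first_hit F2 D0.support D0.start_mem_support
    have hF2nd := hF2p.2
    rw [hsplit, Walk.support_append, List.nodup_append] at hF2nd
    have hF1path : F1.IsPath := Walk.IsPath.mk' hF2nd.1
    have hwF1 : w ∉ F1.support := by
      intro hmem
      exact hF2w (by rw [hsplit]; exact Walk.subset_support_append_left _ _ hmem)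
    have hxv : x ≠ v := by
      rintro rfl
      exact hvD hxD0
    have hxw : x ≠ w := by
      rintro rfl
      exact hwF1 F1.end_mem_support
    have hF1len : 1 ≤ F1.length := pos_length_of_ne F1 (Ne.symm hxv)
    obtain ⟨hQp, hRp, hshareQR⟩ := cycle_split hD0 hwD0 hwu
    set Q := D0.takeUntil w hwD0 with hQdef
    set R := D0.dropUntil w hwD0 with hRdef
    have hQlen : 1 ≤ Q.length := pos_length_of_ne Q (Ne.symm hwu)
    have hQsub : Q.support ⊆ D0.support := Walk.support_takeUntil_subset _ hwD0
    have hRsub : R.support ⊆ D0.support := Walk.support_dropUntil_subset _ hwD0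
    have hxQR : x ∈ Q.support ∨ x ∈ R.support := by
      have h1 := hxD0
      rw [← D0.take_spec hwD0, Walk.mem_support_append_iff] at h1
      exact h1
    have hvD0 : v ∉ D0.support := hvD
    by_cases hxu : x = u
    · -- x = u
      subst hxu
      have hBpath : (Walk.cons hvw.symm F1).IsPath := by
        rw [Walk.cons_isPath_iff]
        exact ⟨hF1path, hwF1⟩
      have hshare : ∀ t, t ∈ Q.support → t ∈ (Walk.cons hvw.symm F1).support →
          t = x ∨ t = w := by
        intro t htA htB
        rw [Walk.support_cons, List.mem_cons] at htB
        rcases htB with rfl | htB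
        · exact Or.inr rfl
        · exact Or.inl (hcond t htB (hQsub htA))
      have hlen3 : 3 ≤ Q.length + (Walk.cons hvw.symm F1).length := by
        rw [Walk.length_cons]
        omega
      refine ⟨_, glue_isCycle (Ne.symm hwu) hQp hBpath hshare hlen3, ?_⟩
      rw [Walk.mem_support_append_iff]
      right
      rw [Walk.support_cons, List.mem_cons]
      exact Or.inr F1.start_mem_support
    by_cases hxQ : x ∈ Q.support
    · -- x strictly inside Q side
      have hQxp : (Q.takeUntil x hxQ).IsPath := hQp.takeUntil hxQ
      have hwQx : w ∉ (Q.takeUntil x hxQ).support := end_not_mem_takeUntil hQp hxQ hxw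
      have hxR : x ∉ R.support := by
        intro hmem
        rcases hshareQR x hxQ hmem with h1 | h1
        · exact hxu h1
        · exact hxw h1
      have hBsup : (F1.reverse.append (Walk.cons hvw R)).support
          = F1.support.reverse ++ R.support := by
        rw [Walk.support_append, Walk.support_reverse, Walk.support_cons, List.tail_cons]
      have hBpath : (F1.reverse.append (Walk.cons hvw R)).IsPath := by
        rw [Walk.isPath_def, hBsup, List.nodup_append]
        refine ⟨by rw [List.nodup_reverse]; exact hF1path.2, hRp.2, ?_⟩
        intro t ht1 t' ht2 htt'; subst htt'
        rw [List.mem_reverse] at ht1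
        rcases hcond t ht1 (hRsub ht2) with rfl
        exact hxR ht2
      have hshare : ∀ t, t ∈ (Q.takeUntil x hxQ).support →
          t ∈ (F1.reverse.append (Walk.cons hvw R)).support → t = u ∨ t = x := by
        intro t htA htB
        rw [hBsup, List.mem_append] at htB
        rcases htB with htB | htB
        · rw [List.mem_reverse] at htB
          exact Or.inr (hcond t htB (hQsub (Walk.support_takeUntil_subset _ hxQ htA)))
        · rcases hshareQR t (Walk.support_takeUntil_subset _ hxQ htA) htB with h1 | h1
          · exact Or.inl h1
          · exact absurd htA (h1 ▸ hwQx)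
      have hlen3 : 3 ≤ (Q.takeUntil x hxQ).length +
          (F1.reverse.append (Walk.cons hvw R)).length := by
        rw [Walk.length_append, Walk.length_reverse, Walk.length_cons]
        have := pos_length_of_ne (Q.takeUntil x hxQ) (fun h => hxu h.symm)
        omega
      refine ⟨_, glue_isCycle (fun h => hxu h.symm) hQxp hBpath hshare hlen3, ?_⟩
      rw [Walk.mem_support_append_iff]
      right
      rw [hBsup, List.mem_append, List.mem_reverse]
      exact Or.inl F1.start_mem_support
    · -- x inside R side
      have hxR : x ∈ R.support := hxQR.resolve_left hxQ
      have hApsupp : (Q.append (Walk.cons hvw.symm F1)).support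
          = Q.support ++ F1.support := by
        rw [Walk.support_append, Walk.support_cons, List.tail_cons]
      have hApath : (Q.append (Walk.cons hvw.symm F1)).IsPath := by
        rw [Walk.isPath_def, hApsupp, List.nodup_append]
        refine ⟨hQp.2, hF1path.2, ?_⟩
        intro t ht1 t' ht2 htt'; subst htt'
        rcases hcond t ht2 (hQsub ht1) with rfl
        exact hxQ ht1
      have hBpath : (R.dropUntil x hxR).IsPath := hRp.dropUntil hxR
      have hwB : w ∉ (R.dropUntil x hxR).support := head_not_mem_dropUntil hRp hxR hxw
      have hBsub : (R.dropUntil x hxR).support ⊆ R.support :=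
        Walk.support_dropUntil_subset _ hxR
      have hshare : ∀ t, t ∈ (Q.append (Walk.cons hvw.symm F1)).support →
          t ∈ (R.dropUntil x hxR).support → t = u ∨ t = x := by
        intro t htA htB
        rw [hApsupp, List.mem_append] at htA
        rcases htA with htA | htA
        · rcases hshareQR t htA (hBsub htB) with h1 | h1
          · exact Or.inl h1
          · exact absurd htB (h1 ▸ hwB)
        · exact Or.inr (hcond t htA (hRsub (hBsub htB)))
      have hlen3 : 3 ≤ (Q.append (Walk.cons hvw.symm F1)).length +
          (R.dropUntil x hxR).length := by
        rw [Walk.length_append, Walk.length_cons]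
        omega
      refine ⟨_, glue_isCycle (fun h => hxu h.symm) hApath hBpath hshare hlen3, ?_⟩
      rw [Walk.mem_support_append_iff]
      left
      rw [hApsupp, List.mem_append]
      exact Or.inr F1.start_mem_support
end Aux2

set_option maxHeartbeats 1000000 in
/-- If `G` is a 2-connected finite simple graph whose longest path
has `p` vertices, then the circumference `c` satisfies `c > √(2p)`. -/
theorem stmt_3 {V : Type*} [Fintype V] (G : SimpleGraph V)
    (hcard : 3 ≤ Fintype.card V)
    (h2conn : ∀ v : V, (G.induce ({v}ᶜ : Set V)).Connected)
    (p c : ℕ)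
    (hp : ∃ (u v : V) (P : G.Walk u v), P.IsPath ∧ P.length + 1 = p)
    (hpmax : ∀ (u v : V) (P : G.Walk u v), P.IsPath → P.length + 1 ≤ p)
    (hc : ∃ (u : V) (C : G.Walk u u), C.IsCycle ∧ C.length = c)
    (hcmax : ∀ (u : V) (C : G.Walk u u), C.IsCycle → C.length ≤ c) :
    Real.sqrt (2 * (p : ℝ)) < (c : ℝ) := by
  classical
  obtain ⟨z0, C0, hC0, hC0len⟩ := hc
  have hc3 : 3 ≤ c := hC0len ▸ hC0.three_le_length
  have hpc : c ≤ p := by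
    cases C0 with
    | nil => exact absurd hC0 Walk.IsCycle.not_of_nil
    | cons hadj C' =>
      rw [Walk.cons_isCycle_iff] at hC0
      have := hpmax _ _ C' hC0.1
      rw [← hC0len, Walk.length_cons]
      omega
  obtain ⟨ua, ub, Pw, hPw, hPlen⟩ := hp
  have hpge : 3 ≤ p := le_trans hc3 hpc
  have hPwlen : 2 ≤ Pw.length := by omega
  have hne : ua ≠ ub := by
    rintro rfl
    rw [path_closed_nil hPw] at hPwlen
    simp at hPwlen
  obtain ⟨D, hD, hubD⟩ := common_cycle hcard h2conn Pw.length (by omega) ua ub Pw hPw rfl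
  have hDlen : D.length ≤ c := hcmax _ _ hD
  obtain ⟨hQp, hRp, -⟩ := cycle_split hD hubD (Ne.symm hne)
  set Q := D.takeUntil ub hubD with hQdef
  set R := D.dropUntil ub hubD with hRdef
  have hQR : Q.length + R.length = D.length := by
    have := congrArg Walk.length (D.take_spec hubD)
    rwa [Walk.length_append] at this
  have hcyc : ∀ (z : V) (D' : G.Walk z z), D'.IsCycle → D'.length ≤ c :=
    fun z D' h => hcmax z D' h
  have hsQ : ua ∈ Pw.support := Pw.start_mem_support
  have htQ : ub ∈ Pw.support := Pw.end_mem_support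
  have hposa : (Pw.takeUntil ua hsQ).length = 0 := takeUntil_start_length _ _
  have hposb : (Pw.takeUntil ub htQ).length = Pw.length := takeUntil_end_length hPw _
  have hcount1 := (count_bound hPw hc3 hcyc Q.length ua ub Q hQp rfl hsQ htQ).2
  have hcount2 := (count_bound hPw hc3 hcyc R.length ub ua R hRp rfl htQ hsQ).1
  rw [hposa, hposb] at hcount1 hcount2
  have hQRc : (Q.length : ℤ) + (R.length : ℤ) ≤ (c : ℤ) := by
    have : Q.length + R.length ≤ c := by omega
    exact_mod_cast this
  have hcz : (3 : ℤ) ≤ (c : ℤ) := by exact_mod_cast hc3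
  have hpz : (Pw.length : ℤ) + 1 = (p : ℤ) := by exact_mod_cast hPlen
  have hmono : ((c : ℤ) - 1) * ((Q.length : ℤ) + (R.length : ℤ)) ≤ ((c : ℤ) - 1) * (c : ℤ) :=
    mul_le_mul_of_nonneg_left hQRc (by linarith)
  have hsum : ((c : ℤ) - 1) * (Q.length : ℤ) + ((c : ℤ) - 1) * (R.length : ℤ)
      = ((c : ℤ) - 1) * ((Q.length : ℤ) + (R.length : ℤ)) := by ring
  have hexp : ((c : ℤ) - 1) * (c : ℤ) = (c : ℤ) ^ 2 - (c : ℤ) := by ring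
  have hfin : 2 * (p : ℤ) < (c : ℤ) ^ 2 := by
    push_cast at hcount1 hcount2
    linarith [hcount1, hcount2, hmono]
  have hcpos : (0 : ℝ) < (c : ℝ) := by
    have : (0 : ℤ) < (c : ℤ) := by linarith
    exact_mod_cast this
  rw [Real.sqrt_lt' hcpos]
  have : ((2 * p : ℤ) : ℝ) < (((c : ℤ) ^ 2 : ℤ) : ℝ) := by exact_mod_cast hfin
  push_cast at this
  linarith
end

section
/- Let G be a connected finite simple graph and let P be a longest path in G with endpoints x and y. If d(x) + d(y) ≥ p, where p is the number of vertices of P, then c = p, i.e., G is Hamiltonian. -/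
open SimpleGraph
open List

namespace StmtFive

variable {V : Type*} {G : SimpleGraph V}

open SimpleGraph.Walk

/-- Take the first `n` edges of a walk. -/
def wtake : {u v : V} → (p : G.Walk u v) → (n : ℕ) → G.Walk u (p.getVert n)
  | _, _, p, 0 => (Walk.nil).copy rfl (p.getVert_zero).symm
  | _, _, .nil, (_+1) => Walk.nil
  | _, _, .cons h q, (n+1) => ((wtake q n).cons h).copy rfl (getVert_cons_succ q h).symm

lemma wtake_length {u v : V} (p : G.Walk u v) (n : ℕ) :
    (wtake p n).length = min n p.length := by
  induction p generalizing n with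
  | nil => cases n <;> simp [wtake]
  | cons h q ih => cases n with
    | zero => simp [wtake]
    | succ n => simp [wtake, ih]

lemma wtake_support {u v : V} (p : G.Walk u v) (n : ℕ) :
    (wtake p n).support = p.support.take (n+1) := by
  induction p generalizing n with
  | nil => cases n <;> simp [wtake]
  | cons h q ih => cases n with
    | zero => simp [wtake]
    | succ n => simp [wtake, ih]

@[simp] lemma getVert_nil' {u : V} (n : ℕ) : (Walk.nil : G.Walk u u).getVert n = u := by
  cases n <;> rfl

lemma wtake_getVert {u v : V} (p : G.Walk u v) (n j : ℕ) :
    (wtake p n).getVert j = p.getVert (min j n) := by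
  induction p generalizing n j with
  | nil => cases n <;> cases j <;> simp [wtake]
  | cons h q ih => cases n with
    | zero => cases j <;> simp [wtake]
    | succ n => cases j with
      | zero => simp [wtake]
      | succ j => simpa [wtake, getVert_cons_succ, Nat.succ_min_succ] using ih n j

lemma drop_length {u v : V} (p : G.Walk u v) (n : ℕ) :
    (p.drop n).length = p.length - n := by
  induction p generalizing n with
  | nil => cases n <;> simp [Walk.drop]
  | cons h q ih => cases n with
    | zero => simp [Walk.drop]
    | succ n => simp [Walk.drop, ih]

lemma drop_support {u v : V} (p : G.Walk u v) (n : ℕ) (hn : n ≤ p.length) :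
    (p.drop n).support = p.support.drop n := by
  induction p generalizing n with
  | nil =>
    have : n = 0 := by simpa using hn
    subst this; simp [Walk.drop]
  | cons h q ih => cases n with
    | zero => simp [Walk.drop]
    | succ n => simpa [Walk.drop] using ih n (by simpa using hn)

lemma getVert_eq_getElem {u v : V} (p : G.Walk u v) (n : ℕ) (hn : n ≤ p.length) :
    p.getVert n = p.support[n]'(by rw [length_support]; omega) := by
  induction p generalizing n with
  | nil =>
    have : n = 0 := by simpa using hn
    subst this; simp
  | cons h q ih => cases n with
    | zero => simp
    | succ n => simpa [getVert_cons_succ] using ih n (by simpa using hn)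

lemma edge_head {u v z : V} (q : G.Walk u v) (hq : q.support.Nodup) (he : s(u, z) ∈ q.edges) :
    z = q.getVert 1 := by
  cases q with
  | nil => simp at he
  | cons h q' =>
    rw [edges_cons, List.mem_cons] at he
    rcases he with he | he
    · rw [Sym2.eq_iff] at he
      rcases he with ⟨-, rfl⟩ | ⟨rfl, rfl⟩
      · rw [getVert_cons_succ (n := 0), getVert_zero]
      · exact absurd rfl h.ne
    · have hu := q'.fst_mem_support_of_mem_edges he
      rw [support_cons, List.nodup_cons] at hq
      exact absurd hu hq.1

end StmtFive


/-- **Lemma 1(ii).** Let `G` be a connected finite simple graph and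
`P` a longest path from `x` to `y` with `p` vertices. If `d(x) + d(y) ≥ p`, then
`c = p`, i.e. `G` is Hamiltonian. -/
theorem stmt_5 {V : Type*} [Fintype V] [DecidableEq V] (G : SimpleGraph V)
    [DecidableRel G.Adj] (hconn : G.Connected)
    (x y : V) (P : G.Walk x y) (hP : P.IsPath)
    (hPmax : ∀ (u v : V) (Q : G.Walk u v), Q.IsPath → Q.length ≤ P.length)
    (p c : ℕ) (hp : p = P.length + 1)
    (hc : ∃ (u : V) (C : G.Walk u u), C.IsCycle ∧ C.length = c)
    (hcmax : ∀ (u : V) (C : G.Walk u u), C.IsCycle → C.length ≤ c)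
    (hdeg : p ≤ G.degree x + G.degree y) :
    c = p ∧ G.IsHamiltonian := by
  classical
  -- Step 0 : since G has a cycle, P.length ≥ 2 and c ≤ p
  have hstep0 : 2 ≤ P.length ∧ c ≤ P.length + 1 := by
    obtain ⟨u, C0, hC0, hlen⟩ := hc
    have hnn : ¬ C0.Nil := hC0.not_nil
    have htp : C0.tail.IsPath := by
      apply Walk.IsPath.mk'
      rw [Walk.support_tail_of_not_nil C0 hnn]
      exact hC0.support_nodup
    have hlen1 : C0.tail.length + 1 = C0.length := Walk.length_tail_add_one hnn
    have h3 := hC0.three_le_length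
    have h4 := hPmax _ _ C0.tail htp
    omega
  have hL2 : 2 ≤ P.length := hstep0.1
  -- Step 1 : all neighbours of x and y lie on P
  have hnbrx : ∀ z, G.Adj x z → z ∈ P.support := by
    intro z hz
    by_contra hzs
    have hQ : (P.cons hz.symm).IsPath := hP.cons hzs
    have := hPmax _ _ _ hQ
    rw [Walk.length_cons] at this
    omega
  have hnbry : ∀ z, G.Adj y z → z ∈ P.support := by
    intro z hz
    by_contra hzs
    have hzs' : z ∉ P.reverse.support := by
      rwa [Walk.support_reverse, List.mem_reverse]
    have hQ : (P.reverse.cons hz.symm).IsPath := hP.reverse.cons hzs'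
    have := hPmax _ _ _ hQ
    rw [Walk.length_cons, Walk.length_reverse] at this
    omega
  -- getVert injectivity on a path
  have hinj : ∀ i j : ℕ, i ≤ P.length → j ≤ P.length → P.getVert i = P.getVert j → i = j := by
    intro i j hi hj hij
    rw [StmtFive.getVert_eq_getElem P i hi, StmtFive.getVert_eq_getElem P j hj] at hij
    exact (hP.support_nodup.getElem_inj_iff).mp hij
  -- Step 2 : counting
  set Ax := (Finset.range P.length).filter (fun i => G.Adj x (P.getVert (i+1))) with hAxdef
  set By := (Finset.range P.length).filter (fun i => G.Adj y (P.getVert i)) with hBydef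
  have hdx : G.degree x ≤ Ax.card := by
    have hsub : G.neighborFinset x ⊆ Ax.image (fun i => P.getVert (i+1)) := by
      intro z hz
      rw [SimpleGraph.mem_neighborFinset] at hz
      have hzs := hnbrx z hz
      rw [Walk.mem_support_iff_exists_getVert] at hzs
      obtain ⟨n, hn, hnle⟩ := hzs
      have hn0 : n ≠ 0 := by
        rintro rfl
        rw [← hn, Walk.getVert_zero] at hz
        exact G.irrefl hz
      obtain ⟨m, rfl⟩ := Nat.exists_eq_succ_of_ne_zero hn0
      refine Finset.mem_image.mpr ⟨m, ?_, hn⟩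
      rw [hAxdef, Finset.mem_filter, Finset.mem_range]
      exact ⟨by omega, hn ▸ hz⟩
    calc G.degree x = (G.neighborFinset x).card := rfl
      _ ≤ (Ax.image (fun i => P.getVert (i+1))).card := Finset.card_le_card hsub
      _ ≤ Ax.card := Finset.card_image_le
  have hdy : G.degree y ≤ By.card := by
    have hsub : G.neighborFinset y ⊆ By.image (fun i => P.getVert i) := by
      intro z hz
      rw [SimpleGraph.mem_neighborFinset] at hz
      have hzs := hnbry z hz
      rw [Walk.mem_support_iff_exists_getVert] at hzs
      obtain ⟨n, hn, hnle⟩ := hzs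
      have hnL : n ≠ P.length := by
        rintro rfl
        rw [← hn, Walk.getVert_length] at hz
        exact G.irrefl hz
      refine Finset.mem_image.mpr ⟨n, ?_, hn⟩
      rw [hBydef, Finset.mem_filter, Finset.mem_range]
      exact ⟨by omega, hn ▸ hz⟩
    calc G.degree y = (G.neighborFinset y).card := rfl
      _ ≤ (By.image (fun i => P.getVert i)).card := Finset.card_le_card hsub
      _ ≤ By.card := Finset.card_image_le
  have hmem : (Ax ∩ By).Nonempty := by
    by_contra hne
    rw [Finset.not_nonempty_iff_eq_empty] at hne
    have h1 := Finset.card_union_add_card_inter Ax By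
    have h2 : (Ax ∪ By).card ≤ P.length := by
      have hsub : Ax ∪ By ⊆ Finset.range P.length :=
        Finset.union_subset (Finset.filter_subset _ _) (Finset.filter_subset _ _)
      simpa using Finset.card_le_card hsub
    rw [hne] at h1
    simp only [Finset.card_empty] at h1
    omega
  obtain ⟨i, hi⟩ := hmem
  rw [Finset.mem_inter, hAxdef, hBydef, Finset.mem_filter, Finset.mem_filter,
    Finset.mem_range] at hi
  obtain ⟨⟨hiL, hxa⟩, -, hya⟩ := hi
  -- Step 3 : build the cycle
  set b := P.getVert (i+1) with hbdef
  set T := StmtFive.wtake P i with hTdef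
  set D := P.drop (i+1) with hDdef
  set R : G.Walk b x := D.append (Walk.cons hya T.reverse) with hRdef
  set C2 : G.Walk x x := Walk.cons hxa R with hC2def
  have hTsup : T.support = P.support.take (i+1) := StmtFive.wtake_support P i
  have hDsup : D.support = P.support.drop (i+1) := StmtFive.drop_support P (i+1) (by omega)
  have hRsup : R.support = P.support.drop (i+1) ++ (P.support.take (i+1)).reverse := by
    rw [hRdef, Walk.support_append, Walk.support_cons, List.tail_cons, Walk.support_reverse,
      hTsup, hDsup]
  have hRperm : R.support ~ P.support := by
    rw [hRsup]
    refine List.perm_append_comm.trans ?_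
    refine (((P.support.take (i+1)).reverse_perm).append_right _).trans ?_
    rw [List.take_append_drop]
  have hRpath : R.IsPath := Walk.IsPath.mk' (hRperm.nodup_iff.mpr hP.support_nodup)
  have hTlen : T.length = i := by rw [hTdef, StmtFive.wtake_length]; omega
  have hDlen : D.length = P.length - (i+1) := StmtFive.drop_length P (i+1)
  have hRlen : R.length = P.length := by
    rw [hRdef, Walk.length_append, Walk.length_cons, Walk.length_reverse, hTlen, hDlen]
    omega
  have hC2len : C2.length = P.length + 1 := by
    rw [hC2def, Walk.length_cons, hRlen]
  have hedge : s(x, b) ∉ R.edges := by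
    intro he
    have he' : s(x, b) ∈ R.reverse.edges := by
      rwa [Walk.edges_reverse, List.mem_reverse]
    have hnd' : R.reverse.support.Nodup := by
      rw [Walk.support_reverse, List.nodup_reverse]
      exact hRpath.support_nodup
    have hb1 : b = R.reverse.getVert 1 := StmtFive.edge_head R.reverse hnd' he'
    rw [Walk.getVert_reverse, hRlen] at hb1
    have harg : P.length - 1 - (P.length - (i+1)) = i := by omega
    have hget : R.getVert (P.length - 1) = (Walk.cons hya T.reverse).getVert i := by
      rw [hRdef, Walk.getVert_append, hDlen, if_neg (by omega), harg]
    rw [hget] at hb1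
    cases i with
    | zero =>
      have hby : b = y := hb1
      have : (1:ℕ) = P.length := by
        apply hinj 1 P.length (by omega) le_rfl
        rw [← hbdef, hby]
        exact (Walk.getVert_length P).symm
      omega
    | succ j =>
      have hbv1 : b = P.getVert 1 := by
        rw [hb1]
        show T.reverse.getVert j = _
        rw [Walk.getVert_reverse, StmtFive.wtake_getVert]
        congr 1
        rw [hTlen]
        omega
      have : j + 1 + 1 = 1 := by
        apply hinj (j+1+1) 1 (by omega) (by omega)
        rw [← hbdef, hbv1]
      omega
  have hC2cyc : C2.IsCycle := (Walk.cons_isCycle_iff R hxa).mpr ⟨hRpath, hedge⟩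
  -- c = p
  have hpc : p ≤ c := by
    have := hcmax x C2 hC2cyc
    omega
  have hcEq : c = p := le_antisymm (by omega) hpc
  -- all vertices lie on P
  have hCmem : ∀ w, w ∈ C2.support ↔ w ∈ P.support := by
    intro w
    rw [hC2def, Walk.support_cons, hRsup]
    simp only [List.mem_cons, List.mem_append, List.mem_reverse]
    constructor
    · rintro (rfl | h | h)
      · exact P.start_mem_support
      · exact List.mem_of_mem_drop h
      · exact List.mem_of_mem_take h
    · intro h
      rw [← List.take_append_drop (i+1) P.support, List.mem_append] at h
      rcases h with h | h
      · exact Or.inr (Or.inr h)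
      · exact Or.inr (Or.inl h)
  have hall : ∀ w, w ∈ P.support := by
    by_contra hns
    push_neg at hns
    obtain ⟨w, hw⟩ := hns
    obtain ⟨W⟩ := hconn x w
    obtain ⟨d, hd, hdf, hds⟩ := W.exists_boundary_dart {v | v ∈ P.support} P.start_mem_support hw
    have hcv : d.fst ∈ C2.support := (hCmem _).mpr hdf
    set C3 := C2.rotate _ hcv with hC3def
    have hC3cyc : C3.IsCycle := hC2cyc.rotate hcv
    have hC3len : C3.length = C2.length := by
      have := (Walk.rotate_darts C2 _ hcv).perm.length_eq
      rwa [Walk.length_darts, Walk.length_darts] at this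
    have htp : C3.tail.IsPath := by
      apply Walk.IsPath.mk'
      rw [Walk.support_tail_of_not_nil C3 hC3cyc.not_nil]
      exact hC3cyc.support_nodup
    have hnot : d.snd ∉ C3.tail.reverse.support := by
      rw [Walk.support_reverse, List.mem_reverse, Walk.support_tail_of_not_nil C3 hC3cyc.not_nil]
      intro hmem2
      have h5 : d.snd ∈ C2.support.tail := (Walk.support_rotate C2 _ hcv).perm.mem_iff.mp hmem2
      exact hds ((hCmem _).mp (List.mem_of_mem_tail h5))
    have hQpath : (Walk.cons d.adj.symm C3.tail.reverse).IsPath := (htp.reverse).cons hnot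
    have h6 := hPmax _ _ _ hQpath
    rw [Walk.length_cons, Walk.length_reverse] at h6
    have h7 := Walk.length_tail_add_one hC3cyc.not_nil
    omega
  -- Hamiltonicity
  have hham : C2.IsHamiltonianCycle := by
    refine ⟨hC2cyc, ?_⟩
    refine Walk.IsPath.isHamiltonian_of_mem ?_ ?_
    · apply Walk.IsPath.mk'
      rw [Walk.support_tail_of_not_nil C2 hC2cyc.not_nil]
      exact hC2cyc.support_nodup
    · intro w
      rw [Walk.support_tail_of_not_nil C2 hC2cyc.not_nil, hC2def, Walk.support_cons, List.tail_cons,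
        hRperm.mem_iff]
      exact hall w
  exact ⟨hcEq, fun _ => ⟨x, C2, hham⟩⟩
end

section
/- Let G be a connected finite simple graph and let P be a longest path in G, with endpoints x and y and a fixed orientation from x to y. Suppose there exist vertices z₁, z₂ on P with x ≺ z₁ ≺ z₂ ≺ y along P such that yz₁ ∈ E(G), xz₂ ∈ E(G), the subpath of P from z₁ to z₂ has at least 3 vertices, neither xz ∈ E(G) nor yz ∈ E(G) for every internal vertex z of the subpath from z₁ to z₂, and d(x) + d(y) ≥ p + 3 − |z₁→z₂|, where |z₁→z₂| is the number of vertices of the subpath of P from z₁ to z₂. Then c = p. -/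
open SimpleGraph

private lemma getD_of_getElem? {V : Type*} {l : List V} {i : ℕ} {z d : V}
    (h : l[i]? = some z) : l.getD i d = z := by
  rw [List.getD_eq_getElem?_getD, h]; rfl

private lemma getElem?_of_lt {V : Type*} (l : List V) (i : ℕ) (d : V)
    (h : i < l.length) : l[i]? = some (l.getD i d) := by
  rw [List.getElem?_eq_getElem h, List.getD_eq_getElem?_getD, List.getElem?_eq_getElem h]
  rfl

/-- An edge between the two endpoints of a path of length `≥ 2` is not on the path. -/
private lemma aux_edge_not_mem {V : Type*} {G : SimpleGraph V} {x y : V} (P : G.Walk x y)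
    (hP : P.IsPath) (h2 : 2 ≤ P.length) : s(x, y) ∉ P.edges := by
  cases P with
  | nil => simp at h2
  | @cons _ w _ h P' =>
    intro hmem
    rw [SimpleGraph.Walk.edges_cons, List.mem_cons] at hmem
    rcases hmem with hmem | hmem
    · rw [Sym2.eq_iff] at hmem
      rcases hmem with ⟨-, rfl⟩ | ⟨rfl, rfl⟩
      · have hP' : P'.IsPath := ((SimpleGraph.Walk.cons_isPath_iff h P').mp hP).1
        have := (SimpleGraph.Walk.isPath_iff_eq_nil (p := P')).mp hP'
        subst this
        simp at h2
      · exact h.ne rfl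
    · have hx : x ∈ P'.support := SimpleGraph.Walk.fst_mem_support_of_mem_edges P' hmem
      exact ((SimpleGraph.Walk.cons_isPath_iff h P').mp hP).2 hx

/-- Splitting a walk at an index. -/
private lemma aux_split {V : Type*} {G : SimpleGraph V} {x y : V} (P : G.Walk x y) :
    ∀ (j : ℕ), j < P.length →
    ∃ (z b : V) (hzb : G.Adj z b) (Q : G.Walk x z) (R : G.Walk b y),
      P = Q.append (SimpleGraph.Walk.cons hzb R) ∧ P.support[j]? = some z ∧
      P.support[j + 1]? = some b := by
  induction P with
  | nil => intro j hj; simp at hj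
  | @cons u w _ h P' ih =>
    intro j hj
    match j with
    | 0 =>
      refine ⟨u, w, h, SimpleGraph.Walk.nil, P', by simp, ?_, ?_⟩
      · simp [SimpleGraph.Walk.support_cons]
      · rw [SimpleGraph.Walk.support_cons, SimpleGraph.Walk.support_eq_cons P']
        simp
    | j + 1 =>
      obtain ⟨z, b, hzb, Q, R, h1, h2, h3⟩ := ih j (by simpa using hj)
      refine ⟨z, b, hzb, SimpleGraph.Walk.cons h Q, R, by simp [h1], ?_, ?_⟩
      · rw [SimpleGraph.Walk.support_cons]; simpa using h2
      · rw [SimpleGraph.Walk.support_cons]; simpa using h3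

/-- Construction of a cycle from a crossing pair of chords. -/
private lemma aux_cycle {V : Type*} {G : SimpleGraph V} {x y z b : V}
    (hzb : G.Adj z b) (Q : G.Walk x z) (R : G.Walk b y)
    (hP : (Q.append (SimpleGraph.Walk.cons hzb R)).IsPath)
    (hzy : G.Adj z y) (hbx : G.Adj b x) (hzx : z ≠ x) :
    ∃ (u : V) (C : G.Walk u u), C.IsCycle ∧
      C.length = (Q.append (SimpleGraph.Walk.cons hzb R)).length + 1 := by
  classical
  have hsup : (Q.support ++ R.support).Nodup := by
    have := hP.support_nodup
    rwa [SimpleGraph.Walk.support_append, SimpleGraph.Walk.support_cons] at this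
  have hedg : (Q.edges ++ (s(z, b) :: R.edges)).Nodup := by
    have := hP.isTrail.edges_nodup
    rwa [SimpleGraph.Walk.edges_append, SimpleGraph.Walk.edges_cons] at this
  have hqnd : Q.support.Nodup := hsup.of_append_left
  have hrnd : R.support.Nodup := hsup.of_append_right
  have hdisj : ∀ a ∈ Q.support, a ∉ R.support := fun a ha hb =>
    (List.disjoint_of_nodup_append hsup) ha hb
  have hynq : y ∉ Q.support := fun hy => hdisj y hy R.end_mem_support
  have hznr : z ∉ R.support := fun hz => hdisj z Q.end_mem_support hz
  have hbnq : b ∉ Q.support := fun hb => hdisj b hb R.start_mem_support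
  have hxnr : x ∉ R.support := fun hx => hdisj x Q.start_mem_support hx
  have hqend : Q.edges.Nodup := hedg.of_append_left
  have hrend : R.edges.Nodup := (hedg.of_append_right).of_cons
  have hedisj : ∀ e ∈ Q.edges, e ∉ R.edges := fun e he he' =>
    (List.disjoint_of_nodup_append hedg) he (List.mem_cons_of_mem _ he')
  refine ⟨x, Q.append (SimpleGraph.Walk.cons hzy
    (R.reverse.append (SimpleGraph.Walk.cons hbx SimpleGraph.Walk.nil))), ?_, ?_⟩
  · rw [SimpleGraph.Walk.isCycle_def]
    refine ⟨?_, ?_, ?_⟩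
    · -- trail: edges nodup
      rw [SimpleGraph.Walk.isTrail_def]
      rw [SimpleGraph.Walk.edges_append, SimpleGraph.Walk.edges_cons,
        SimpleGraph.Walk.edges_append, SimpleGraph.Walk.edges_reverse,
        SimpleGraph.Walk.edges_cons, SimpleGraph.Walk.edges_nil]
      rw [List.nodup_append]
      refine ⟨hqend, ?_, ?_⟩
      · rw [List.nodup_cons, List.nodup_append]
        refine ⟨?_, List.nodup_reverse.mpr hrend, by simp, ?_⟩
        · intro hmem
          rw [List.mem_append] at hmem
          rcases hmem with hmem | hmem
          · rw [List.mem_reverse] at hmem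
            exact hznr (SimpleGraph.Walk.fst_mem_support_of_mem_edges R hmem)
          · rw [List.mem_singleton, Sym2.eq_iff] at hmem
            rcases hmem with ⟨rfl, -⟩ | ⟨rfl, -⟩
            · exact hzb.ne rfl
            · exact hzx rfl
        · intro e he
          rw [List.mem_reverse] at he
          intro b' hb' heq
          rw [List.mem_singleton] at hb'
          subst hb'
          subst heq
          exact hxnr (SimpleGraph.Walk.snd_mem_support_of_mem_edges R he)
      · intro e he e' hmem heq
        rw [← heq] at hmem
        simp only [List.mem_cons, List.mem_append, List.mem_singleton,
          List.mem_reverse] at hmem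
        rcases hmem with rfl | hmem | rfl | hmem
        · exact hynq (SimpleGraph.Walk.snd_mem_support_of_mem_edges Q he)
        · exact hedisj e he hmem
        · exact hbnq (SimpleGraph.Walk.fst_mem_support_of_mem_edges Q he)
        · simp at hmem
    · -- not nil
      intro hnil
      have := congrArg SimpleGraph.Walk.length hnil
      rw [SimpleGraph.Walk.length_append, SimpleGraph.Walk.length_cons,
        SimpleGraph.Walk.length_nil] at this
      omega
    · -- support tail nodup
      have hQs : Q.support = x :: Q.support.tail := SimpleGraph.Walk.support_eq_cons Q
      rw [SimpleGraph.Walk.support_append, SimpleGraph.Walk.support_cons]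
      rw [SimpleGraph.Walk.support_append, SimpleGraph.Walk.support_reverse,
        SimpleGraph.Walk.support_cons, SimpleGraph.Walk.support_nil]
      simp only [List.tail_cons]
      rw [hQs, List.cons_append, List.tail_cons]
      have hqnd' : (x :: Q.support.tail).Nodup := hQs ▸ hqnd
      have hxnt : x ∉ Q.support.tail := (List.nodup_cons.mp hqnd').1
      rw [List.nodup_append]
      refine ⟨?_, ?_, ?_⟩
      · exact (List.nodup_cons.mp hqnd').2
      · rw [List.nodup_append]
        refine ⟨List.nodup_reverse.mpr hrnd, by simp, ?_⟩
        intro a ha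
        rw [List.mem_reverse] at ha
        intro b' hb' heq
        rw [List.mem_singleton] at hb'
        subst hb'
        subst heq
        exact hxnr ha
      · intro a ha a' hmem heq
        rw [← heq] at hmem
        have haQ : a ∈ Q.support := by rw [hQs]; exact List.mem_cons_of_mem _ ha
        simp only [List.mem_append, List.mem_reverse, List.mem_singleton] at hmem
        rcases hmem with hmem | rfl
        · exact hdisj a haQ hmem
        · exact hxnt ha
  · rw [SimpleGraph.Walk.length_append, SimpleGraph.Walk.length_cons,
      SimpleGraph.Walk.length_append, SimpleGraph.Walk.length_reverse,
      SimpleGraph.Walk.length_cons, SimpleGraph.Walk.length_nil,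
      SimpleGraph.Walk.length_append, SimpleGraph.Walk.length_cons]
    omega

/-- **Lemma 1(iii).** Let `G` be a connected finite simple graph and
`P` a longest path from `x` to `y` with `p` vertices.  Suppose `z₁, z₂` lie on `P`
at positions `i₁ < i₂` with `x ≺ z₁ ≺ z₂ ≺ y` (i.e. `0 < i₁` and `i₂ < P.length`),
`yz₁ ∈ E(G)`, `xz₂ ∈ E(G)`, the subpath of `P` from `z₁` to `z₂` has
`i₂ - i₁ + 1 ≥ 3` vertices, no internal vertex `z` of that subpath satisfies
`xz ∈ E(G)` or `yz ∈ E(G)`, and `d(x) + d(y) ≥ p + 3 − (i₂ - i₁ + 1)`.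
Then `c = p`. -/
theorem stmt_6 {V : Type*} [Fintype V] [DecidableEq V] (G : SimpleGraph V)
    [DecidableRel G.Adj] (hconn : G.Connected)
    (x y : V) (P : G.Walk x y) (hP : P.IsPath)
    (hPmax : ∀ (u v : V) (Q : G.Walk u v), Q.IsPath → Q.length ≤ P.length)
    (p c : ℕ) (hp : p = P.length + 1)
    (hc : ∃ (u : V) (C : G.Walk u u), C.IsCycle ∧ C.length = c)
    (hcmax : ∀ (u : V) (C : G.Walk u u), C.IsCycle → C.length ≤ c)
    (z₁ z₂ : V) (i₁ i₂ : ℕ)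
    (hz₁ : P.support[i₁]? = some z₁) (hz₂ : P.support[i₂]? = some z₂)
    (hx₁ : 0 < i₁) (h₂y : i₂ < P.length)
    (hyz₁ : G.Adj y z₁) (hxz₂ : G.Adj x z₂)
    (hlen : i₁ + 2 ≤ i₂)
    (hint : ∀ (j : ℕ) (z : V), i₁ < j → j < i₂ → P.support[j]? = some z →
      ¬ G.Adj x z ∧ ¬ G.Adj y z)
    (hdeg : p + 3 ≤ G.degree x + G.degree y + (i₂ - i₁ + 1)) :
    c = p := by
  classical
  set n := P.length with hn
  have hn4 : 4 ≤ n := by omega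
  -- c ≤ p
  have hcp : c ≤ p := by
    obtain ⟨u, C, hC, hCl⟩ := hc
    cases C with
    | nil => rw [← hCl]; simp
    | cons h C' =>
      have hC' : C'.IsPath := ((SimpleGraph.Walk.cons_isCycle_iff C' h).mp hC).1
      have := hPmax _ _ C' hC'
      rw [← hCl, SimpleGraph.Walk.length_cons]
      omega
  -- neighbors of x and y lie on P
  have hnx : ∀ w, G.Adj x w → w ∈ P.support := by
    intro w hw
    by_contra hwn
    have : (SimpleGraph.Walk.cons hw.symm P).IsPath := hP.cons hwn
    have := hPmax _ _ _ this
    rw [SimpleGraph.Walk.length_cons] at this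
    omega
  have hny : ∀ w, G.Adj y w → w ∈ P.support := by
    intro w hw
    by_contra hwn
    have hwn' : w ∉ P.reverse.support := by rwa [SimpleGraph.Walk.support_reverse, List.mem_reverse]
    have : (SimpleGraph.Walk.cons hw.symm P.reverse).IsPath := hP.reverse.cons hwn'
    have := hPmax _ _ _ this
    rw [SimpleGraph.Walk.length_cons, SimpleGraph.Walk.length_reverse] at this
    omega
  set s := P.support with hs
  have hslen : s.length = n + 1 := P.length_support
  have hs0 : s[0]? = some x := by
    rw [hs, SimpleGraph.Walk.support_eq_cons P]
    simp
  have hsn : s[n]? = some y := by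
    have h1 : s.reverse[0]? = some y := by
      rw [hs, ← SimpleGraph.Walk.support_reverse, SimpleGraph.Walk.support_eq_cons P.reverse]
      simp
    rwa [List.getElem?_reverse (by rw [hslen]; omega), hslen,
      Nat.add_sub_cancel, Nat.sub_zero] at h1
  -- the two index sets
  set A : Finset ℕ := (Finset.range n).filter (fun i => G.Adj y (s.getD i x)) with hA
  set B : Finset ℕ := (Finset.range n).filter (fun i => G.Adj x (s.getD (i + 1) x)) with hB
  have hdA : G.degree y ≤ A.card := by
    rw [← SimpleGraph.card_neighborFinset_eq_degree]
    apply Finset.card_le_card_of_surjOn (fun i => s.getD i x)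
    intro w hw
    have hw' : G.Adj y w := by simpa using hw
    obtain ⟨i, hi, hieq⟩ := List.mem_iff_getElem.mp (hny w hw')
    have hgd : s.getD i x = w := by
      rw [List.getD_eq_getElem?_getD, List.getElem?_eq_getElem hi]
      exact hieq
    have hin : i ≠ n := by
      intro heq; subst heq
      have h' := List.getElem?_eq_getElem hi
      rw [hieq, hsn] at h'
      exact hw'.ne (Option.some_injective _ h')
    refine ⟨i, Finset.mem_coe.mpr (Finset.mem_filter.mpr ⟨?_, ?_⟩), hgd⟩
    · rw [Finset.mem_range]; rw [hslen] at hi; omega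
    · rw [hgd]; exact hw'
  have hdB : G.degree x ≤ B.card := by
    rw [← SimpleGraph.card_neighborFinset_eq_degree]
    apply Finset.card_le_card_of_surjOn (fun i => s.getD (i + 1) x)
    intro w hw
    have hw' : G.Adj x w := by simpa using hw
    obtain ⟨i, hi, hieq⟩ := List.mem_iff_getElem.mp (hnx w hw')
    have hgd : s.getD i x = w := by
      rw [List.getD_eq_getElem?_getD, List.getElem?_eq_getElem hi]
      exact hieq
    have hi0 : i ≠ 0 := by
      intro heq; subst heq
      have h' := List.getElem?_eq_getElem hi
      rw [hieq, hs0] at h'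
      exact hw'.ne (Option.some_injective _ h')
    obtain ⟨k, rfl⟩ : ∃ k, i = k + 1 := ⟨i - 1, by omega⟩
    refine ⟨k, Finset.mem_coe.mpr (Finset.mem_filter.mpr ⟨?_, ?_⟩), hgd⟩
    · rw [Finset.mem_range]; rw [hslen] at hi; omega
    · rw [hgd]; exact hw'
  -- crossing pair exists
  have hcross : ∃ j, j ∈ A ∧ j ∈ B := by
    by_contra hno
    push_neg at hno
    have hABd : Disjoint A B := by
      rw [Finset.disjoint_left]
      intro a ha hb
      exact hno a ha hb
    have hsub : A ∪ B ⊆ (Finset.range n) \ (Finset.Ioo i₁ (i₂ - 1)) := by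
      intro j hj
      rw [Finset.mem_sdiff, Finset.mem_Ioo]
      have hjr : j ∈ Finset.range n := by
        rcases Finset.mem_union.mp hj with hj | hj
        · exact Finset.mem_filter.mp hj |>.1
        · exact Finset.mem_filter.mp hj |>.1
      refine ⟨hjr, ?_⟩
      rintro ⟨hj1, hj2⟩
      rcases Finset.mem_union.mp hj with hj | hj
      · have hadj : G.Adj y (s.getD j x) := (Finset.mem_filter.mp hj).2
        have hjlt : j < s.length := by rw [hslen]; omega
        exact (hint j (s.getD j x) hj1 (by omega) (getElem?_of_lt s j x hjlt)).2 hadj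
      · have hadj : G.Adj x (s.getD (j + 1) x) := (Finset.mem_filter.mp hj).2
        have hjlt : j + 1 < s.length := by rw [hslen]; omega
        exact (hint (j + 1) (s.getD (j + 1) x) (by omega) (by omega)
          (getElem?_of_lt s (j + 1) x hjlt)).1 hadj
    have h1 : A.card + B.card = (A ∪ B).card := (Finset.card_union_of_disjoint hABd).symm
    have h2 : (A ∪ B).card ≤ ((Finset.range n) \ (Finset.Ioo i₁ (i₂ - 1))).card :=
      Finset.card_le_card hsub
    have hgsub : Finset.Ioo i₁ (i₂ - 1) ⊆ Finset.range n := by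
      intro j hj
      rw [Finset.mem_Ioo] at hj
      rw [Finset.mem_range]
      omega
    have h3 : ((Finset.range n) \ (Finset.Ioo i₁ (i₂ - 1))).card =
        n - (Finset.Ioo i₁ (i₂ - 1)).card := by
      rw [Finset.card_sdiff_of_subset hgsub, Finset.card_range]
    rw [Nat.card_Ioo] at h3
    omega
  obtain ⟨j, hjA, hjB⟩ := hcross
  have hjn : j < n := Finset.mem_range.mp (Finset.mem_filter.mp hjA).1
  have hyj : G.Adj y (s.getD j x) := (Finset.mem_filter.mp hjA).2
  have hxj : G.Adj x (s.getD (j + 1) x) := (Finset.mem_filter.mp hjB).2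
  -- it suffices to find a cycle of length p
  suffices hpc : p ≤ c by omega
  by_cases hadj : G.Adj x y
  · have hcyc : (SimpleGraph.Walk.cons hadj.symm P).IsCycle := by
      rw [SimpleGraph.Walk.cons_isCycle_iff]
      refine ⟨hP, ?_⟩
      rw [Sym2.eq_swap]
      exact aux_edge_not_mem P hP (by omega)
    have := hcmax _ _ hcyc
    rw [SimpleGraph.Walk.length_cons] at this
    omega
  · obtain ⟨z, b, hzb, Q, R, hPQ, hjz, hjb⟩ := aux_split P j (by omega)
    have hz : s.getD j x = z := getD_of_getElem? hjz
    have hb : s.getD (j + 1) x = b := getD_of_getElem? hjb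
    rw [hz] at hyj
    rw [hb] at hxj
    have hzx : z ≠ x := by
      intro heq; subst heq
      exact hadj hyj.symm
    have hP' : (Q.append (SimpleGraph.Walk.cons hzb R)).IsPath := hPQ ▸ hP
    obtain ⟨u, C, hC, hCl⟩ := aux_cycle hzb Q R hP' hyj.symm hxj.symm hzx
    have := hcmax _ _ hC
    rw [hCl, ← hPQ] at this
    omega
end

section
/- Let G be a finite simple graph, let P be a longest path in G, and suppose {L₁, L₂, ..., L_m} is a vine on P consisting of m paths. Then the circumference c of G satisfies c ≥ (2p − 10)/(m + 1) + 4, where p is the number of vertices of P. -/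
open SimpleGraph

/-- A vine `{L₁, …, Lₘ}` on a path `P = x…y` of a graph `G`: a family of `m ≥ 1`
pairwise internally-disjoint nontrivial paths `Lᵢ : xᵢ → yᵢ` meeting `P` exactly in
their endpoints, whose endpoints sit on `P` at positions `ix i` (for `xᵢ`) and
`iy i` (for `yᵢ`) satisfying
`x = x₁ ≺ x₂ ≺ y₁ ⪯ x₃ ≺ y₂ ⪯ x₄ ≺ … ⪯ xₘ ≺ y_{m−1} ≺ yₘ = y` along `P`. -/
structure Vine {V : Type*} (G : SimpleGraph V) {x y : V} (P : G.Walk x y)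
    (m : ℕ) : Prop where
  pos : 0 < m
  ex : ∃ (X Y : Fin m → V) (ix iy : Fin m → ℕ) (L : ∀ i : Fin m, G.Walk (X i) (Y i)),
    (∀ i, (L i).IsPath) ∧
    -- each `Lᵢ` has at least two vertices
    (∀ i, X i ≠ Y i) ∧
    -- `xᵢ` and `yᵢ` lie on `P` at positions `ix i` and `iy i`
    (∀ i, P.support[ix i]? = some (X i)) ∧
    (∀ i, P.support[iy i]? = some (Y i)) ∧
    -- `Lᵢ` meets `P` exactly in `{xᵢ, yᵢ}`
    (∀ i, ∀ v ∈ (L i).support, v ∈ P.support → v = X i ∨ v = Y i) ∧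
    -- the paths are pairwise internally disjoint
    (∀ i j, i ≠ j → ∀ v ∈ (L i).support, v ∈ (L j).support →
      (v = X i ∨ v = Y i) ∧ (v = X j ∨ v = Y j)) ∧
    -- `x₁ = x` and `yₘ = y`
    (ix ⟨0, pos⟩ = 0) ∧
    (iy ⟨m - 1, by omega⟩ = P.length) ∧
    -- `x₁ ≺ x₂` (when `m ≥ 2`)
    (∀ h : 1 < m, ix ⟨0, pos⟩ < ix ⟨1, h⟩) ∧
    -- `x_{i+1} ≺ y_i`
    (∀ (i : Fin m) (h : (i : ℕ) + 1 < m), ix ⟨(i : ℕ) + 1, h⟩ < iy i) ∧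
    -- `y_i ⪯ x_{i+2}`
    (∀ (i : Fin m) (h : (i : ℕ) + 2 < m), iy i ≤ ix ⟨(i : ℕ) + 2, h⟩) ∧
    -- `y_{m−1} ≺ yₘ` (when `m ≥ 2`)
    (∀ h : 1 < m, iy ⟨m - 2, by omega⟩ < iy ⟨m - 1, by omega⟩)


namespace StmtAux



variable {V : Type*} {G : SimpleGraph V}

/-- Take the first `k` darts of a walk. -/
def takeW : {u v : V} → (W : G.Walk u v) → (k : ℕ) → G.Walk u (W.getVert k)
  | _, _, W, 0 => (Walk.nil).copy rfl (W.getVert_zero).symm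
  | _, _, .nil, (_+1) => Walk.nil
  | _, _, .cons h q, (k+1) => Walk.cons h (takeW q k)

/-- Drop the first `k` darts of a walk. -/
def dropW : {u v : V} → (W : G.Walk u v) → (k : ℕ) → G.Walk (W.getVert k) v
  | _, _, W, 0 => W.copy (W.getVert_zero).symm rfl
  | _, _, .nil, (_+1) => Walk.nil
  | _, _, .cons _ q, (k+1) => dropW q k

@[simp] lemma length_takeW : ∀ {u v : V} (W : G.Walk u v) (k : ℕ),
    (takeW W k).length = min k W.length
  | _, _, W, 0 => by simp [takeW]
  | _, _, .nil, (k+1) => by simp [takeW]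
  | _, _, .cons h q, (k+1) => by
      show (takeW q k).length + 1 = min (k+1) (q.length+1)
      simp only [takeW, Walk.length_cons, length_takeW q k]
      omega

@[simp] lemma length_dropW : ∀ {u v : V} (W : G.Walk u v) (k : ℕ),
    (dropW W k).length = W.length - k
  | _, _, W, 0 => by simp [dropW]
  | _, _, .nil, (k+1) => by simp [dropW]
  | _, _, .cons h q, (k+1) => by simp [dropW, length_dropW q k]

lemma getVert_takeW : ∀ {u v : V} (W : G.Walk u v) (k t : ℕ),
    (takeW W k).getVert t = W.getVert (min t k)
  | _, _, W, 0, t => by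
      simp only [takeW, Walk.getVert_copy, Nat.min_zero, Walk.getVert_zero]
      exact Walk.getVert_of_length_le _ (by simp)
  | _, _, .nil, (k+1), t => by
      simp only [takeW]
      cases t <;> rfl
  | _, _, .cons h q, (k+1), 0 => by simp [takeW]
  | _, _, .cons h q, (k+1), (t+1) => by
      have : (t + 1) ⊓ (k + 1) = t ⊓ k + 1 := by omega
      simpa [takeW, this] using getVert_takeW q k t

lemma getVert_dropW : ∀ {u v : V} (W : G.Walk u v) (k t : ℕ),
    (dropW W k).getVert t = W.getVert (k + t)
  | _, _, W, 0, t => by simp [dropW]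
  | _, _, .nil, (k+1), t => by cases t <;> rfl
  | _, _, .cons h q, (k+1), t => by
      simpa [dropW, Nat.succ_add] using getVert_dropW q k t

lemma getVert_mem_support' {u v : V} (W : G.Walk u v) (t : ℕ) :
    W.getVert t ∈ W.support := by
  rcases le_or_gt t W.length with h | h
  · exact Walk.mem_support_iff_exists_getVert.2 ⟨t, rfl, h⟩
  · rw [Walk.getVert_of_length_le W h.le]
    exact Walk.end_mem_support W

lemma support_takeW_subset {u v : V} (W : G.Walk u v) (k : ℕ) :
    (takeW W k).support ⊆ W.support := by
  intro z hz
  obtain ⟨t, ht, -⟩ := Walk.mem_support_iff_exists_getVert.1 hz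
  rw [getVert_takeW] at ht
  exact ht ▸ getVert_mem_support' W _

lemma IsPath.takeW' : ∀ {u v : V} {W : G.Walk u v}, W.IsPath → ∀ (k : ℕ),
    (takeW W k).IsPath
  | _, _, W, hW, 0 => by simp [takeW]
  | _, _, .nil, hW, (k+1) => by simp [takeW]
  | u, _, .cons h q, hW, (k+1) => by
      rw [Walk.cons_isPath_iff] at hW
      refine (Walk.cons_isPath_iff _ _).2 ⟨IsPath.takeW' hW.1 k, fun hu => ?_⟩
      exact hW.2 (support_takeW_subset q k hu)

lemma IsPath.dropW' : ∀ {u v : V} {W : G.Walk u v}, W.IsPath → ∀ (k : ℕ),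
    (dropW W k).IsPath
  | _, _, W, hW, 0 => by simpa [dropW] using hW
  | _, _, .nil, hW, (k+1) => by simp [dropW]
  | _, _, .cons h q, hW, (k+1) => IsPath.dropW' hW.of_cons k

variable {V : Type*} {G : SimpleGraph V}

-- insert part1 here when merging
section Seg

/-- The segment of a walk from position `i` to position `j`. -/
def seg {u v : V} (W : G.Walk u v) (i j : ℕ) (hij : i ≤ j) :
    G.Walk (W.getVert i) (W.getVert j) :=
  (takeW (dropW W i) (j - i)).copy rfl
    (by rw [getVert_dropW]; congr 1; omega)

lemma length_seg {u v : V} (W : G.Walk u v) {i j : ℕ} (hij : i ≤ j)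
    (hj : j ≤ W.length) : (seg W i j hij).length = j - i := by
  simp only [seg, Walk.length_copy, length_takeW, length_dropW]
  omega

lemma isPath_seg {u v : V} {W : G.Walk u v} (hW : W.IsPath) (i j : ℕ) (hij : i ≤ j) :
    (seg W i j hij).IsPath := by
  simp only [seg, Walk.isPath_copy]
  exact IsPath.takeW' (IsPath.dropW' hW i) _

lemma getVert_seg {u v : V} (W : G.Walk u v) {i j : ℕ} (hij : i ≤ j) (t : ℕ) :
    (seg W i j hij).getVert t = W.getVert (i + min t (j - i)) := by
  simp only [seg, Walk.getVert_copy, getVert_takeW, getVert_dropW]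

lemma mem_support_seg {u v : V} (W : G.Walk u v) {i j : ℕ} (hij : i ≤ j)
    (hj : j ≤ W.length) {z : V} :
    z ∈ (seg W i j hij).support ↔ ∃ k, i ≤ k ∧ k ≤ j ∧ W.getVert k = z := by
  rw [Walk.mem_support_iff_exists_getVert]
  constructor
  · rintro ⟨t, ht, hlt⟩
    rw [getVert_seg] at ht
    exact ⟨i + min t (j - i), by omega, by omega, ht⟩
  · rintro ⟨k, hik, hkj, hk⟩
    refine ⟨k - i, ?_, ?_⟩
    · rw [getVert_seg]; rw [show i + min (k-i) (j-i) = k by omega]; exact hk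
    · rw [length_seg W hij hj]; omega

end Seg

section Inj

lemma support_getElem_eq_getVert :
    ∀ {u v : V} (W : G.Walk u v) (k : ℕ) (h : k < W.support.length),
    W.support[k] = W.getVert k
  | _, _, .nil, 0, _ => rfl
  | _, _, .nil, (k+1), h => by simp at h
  | _, _, .cons a q, 0, _ => rfl
  | _, _, .cons a q, (k+1), h => by
      simpa using support_getElem_eq_getVert q k (by simpa using h)

lemma getVert_inj {u v : V} {W : G.Walk u v} (hW : W.IsPath) {k l : ℕ}
    (hk : k ≤ W.length) (hl : l ≤ W.length) (h : W.getVert k = W.getVert l) :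
    k = l := by
  have hnd : W.support.Nodup := hW.support_nodup
  have hlen : W.support.length = W.length + 1 := Walk.length_support W
  have hk' : k < W.support.length := by omega
  have hl' : l < W.support.length := by omega
  have h2 := List.nodup_iff_injective_get.1 hnd
    (a₁ := ⟨k, hk'⟩) (a₂ := ⟨l, hl'⟩) (by
      simp only [List.get_eq_getElem, support_getElem_eq_getVert _ _ hk',
        support_getElem_eq_getVert _ _ hl', h])
  exact congrArg Fin.val h2

lemma support_getElem?_iff {u v : V} (W : G.Walk u v) {k : ℕ} {z : V} :
    W.support[k]? = some z ↔ k ≤ W.length ∧ W.getVert k = z := by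
  have hlen : W.support.length = W.length + 1 := Walk.length_support W
  constructor
  · intro h
    have hk : k < W.support.length := by
      by_contra hk
      rw [List.getElem?_eq_none (by omega)] at h
      cases h
    rw [List.getElem?_eq_getElem hk] at h
    exact ⟨by omega, by rw [← support_getElem_eq_getVert W k hk]; exact Option.some.inj h⟩
  · rintro ⟨hk, rfl⟩
    rw [List.getElem?_eq_getElem (by omega)]
    rw [support_getElem_eq_getVert W k (by omega)]

end Inj

section Append

/-- Edge between the two endpoints of a path forces length one. -/
lemma length_eq_one_of_mem_edges :
    ∀ {u v : V} {W : G.Walk u v}, W.IsPath → s(u, v) ∈ W.edges → W.length = 1 := by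
  intro u v W hW he
  cases W with
  | nil => simp at he
  | @cons _ w _ h q =>
    rw [Walk.edges_cons, List.mem_cons] at he
    rcases he with he | he
    · rw [Walk.cons_isPath_iff] at hW
      have hune : u ∉ q.support := hW.2
      have hwv : w = v := by
        rcases Sym2.eq_iff.1 he with ⟨-, h2⟩ | ⟨h1, h2⟩
        · exact h2.symm
        · exact h1.symm.trans h2.symm
      subst hwv
      have : q = Walk.nil := Walk.isPath_iff_eq_nil.1 hW.1
      simp [this]
    · exfalso
      have : u ∈ q.support := Walk.fst_mem_support_of_mem_edges q he
      rw [Walk.cons_isPath_iff] at hW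
      exact hW.2 this

lemma edges_disjoint_of_meet {u v w u' : V} {S : G.Walk u v} {T : G.Walk w u'}
    (hmeet : ∀ z, z ∈ S.support → z ∈ T.support → z = u ∨ z = v)
    (hno : ¬ (s(u, v) ∈ S.edges ∧ s(u, v) ∈ T.edges)) :
    S.edges.Disjoint T.edges := by
  intro e heS heT
  induction e using Sym2.ind with
  | _ a b =>
    have haS : a ∈ S.support := Walk.fst_mem_support_of_mem_edges S heS
    have hbS : b ∈ S.support := Walk.snd_mem_support_of_mem_edges S heS
    have haT : a ∈ T.support := Walk.fst_mem_support_of_mem_edges T heT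
    have hbT : b ∈ T.support := Walk.snd_mem_support_of_mem_edges T heT
    have hadj : G.Adj a b := Walk.adj_of_mem_edges S heS
    have hab : a ≠ b := hadj.ne
    rcases hmeet a haS haT with rfl | rfl <;> rcases hmeet b hbS hbT with rfl | rfl
    · exact hab rfl
    · exact hno ⟨heS, heT⟩
    · rw [Sym2.eq_swap] at heS heT
      exact hno ⟨heS, heT⟩
    · exact hab rfl

lemma isPath_append_of_meet {u v w : V} {S : G.Walk u v} {T : G.Walk v w}
    (hS : S.IsPath) (hT : T.IsPath)
    (hmeet : ∀ z, z ∈ S.support → z ∈ T.support → z = v) :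
    (S.append T).IsPath := by
  have hTsup : T.support = v :: T.support.tail := T.support_eq_cons
  have hvT : v ∉ T.support.tail := by
    have := hT.support_nodup
    rw [hTsup] at this
    exact (List.nodup_cons.1 this).1
  rw [Walk.isPath_def, Walk.support_append, List.nodup_append]
  refine ⟨hS.support_nodup, ?_, ?_⟩
  · have := hT.support_nodup
    rw [hTsup] at this
    exact (List.nodup_cons.1 this).2
  · intro z hzS w hzT heq
    subst heq
    have : z = v := hmeet z hzS (List.mem_of_mem_tail hzT)
    subst this
    exact hvT hzT

lemma isCycle_append_of_meet {u v : V} {S : G.Walk u v} {T : G.Walk v u}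
    (hS : S.IsPath) (hT : T.IsPath) (hne : u ≠ v)
    (hlen : 3 ≤ S.length + T.length)
    (hmeet : ∀ z, z ∈ S.support → z ∈ T.support → z = u ∨ z = v) :
    (S.append T).IsCycle := by
  have hSsup : S.support = u :: S.support.tail := S.support_eq_cons
  have hTsup : T.support = v :: T.support.tail := T.support_eq_cons
  have huS : u ∉ S.support.tail := by
    have := hS.support_nodup; rw [hSsup] at this; exact (List.nodup_cons.1 this).1
  have hvT : v ∉ T.support.tail := by
    have := hT.support_nodup; rw [hTsup] at this; exact (List.nodup_cons.1 this).1
  rw [Walk.isCycle_def]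
  refine ⟨⟨?_⟩, ?_, ?_⟩
  · -- edges nodup
    rw [Walk.edges_append, List.nodup_append]
    refine ⟨hS.edges_nodup, hT.edges_nodup, ?_⟩
    intro a ha b hb hab; subst hab; refine edges_disjoint_of_meet hmeet ?_ ha hb
    rintro ⟨heS, heT⟩
    have h1 : S.length = 1 := length_eq_one_of_mem_edges hS heS
    have h2 : T.length = 1 := by
      refine length_eq_one_of_mem_edges hT ?_
      rwa [Sym2.eq_swap]
    omega
  · -- ≠ nil
    intro hnil
    have := congrArg Walk.length hnil
    rw [Walk.length_append] at this
    simp only [Walk.length_nil] at this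
    omega
  · -- support tail nodup
    rw [Walk.support_append, hSsup, List.cons_append, List.tail_cons, List.nodup_append]
    refine ⟨?_, ?_, ?_⟩
    · have := hS.support_nodup; rw [hSsup] at this; exact (List.nodup_cons.1 this).2
    · have := hT.support_nodup; rw [hTsup] at this; exact (List.nodup_cons.1 this).2
    · intro z hzS w hzT heq
      subst heq
      rcases hmeet z (List.mem_of_mem_tail hzS) (List.mem_of_mem_tail hzT) with rfl | rfl
      · exact huS hzS
      · exact hvT hzT

end Append

section VineData

variable {x y : V}

/-- Bundled, ℕ-indexed vine data on a path `P`. -/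
structure VD (G : SimpleGraph V) {x y : V} (P : G.Walk x y) (m : ℕ) (A B : ℕ → ℕ)
    (LW : ∀ k, k < m → G.Walk (P.getVert (A k)) (P.getVert (B k))) : Prop where
  hP : P.IsPath
  hm : 0 < m
  hA : ∀ k, k < m → A k ≤ P.length
  hB : ∀ k, k < m → B k ≤ P.length
  hLp : ∀ k (h : k < m), (LW k h).IsPath
  hne : ∀ k (h : k < m), P.getVert (A k) ≠ P.getVert (B k)
  hLP : ∀ k (h : k < m), ∀ v ∈ (LW k h).support, v ∈ P.support →
      v = P.getVert (A k) ∨ v = P.getVert (B k)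
  hLL : ∀ k l (hk : k < m) (hl : l < m), k ≠ l → ∀ v ∈ (LW k hk).support,
      v ∈ (LW l hl).support →
      (v = P.getVert (A k) ∨ v = P.getVert (B k)) ∧
      (v = P.getVert (A l) ∨ v = P.getVert (B l))
  hA0 : A 0 = 0
  hBlast : B (m-1) = P.length
  hA01 : 1 < m → A 0 < A 1
  hAB : ∀ k, k + 1 < m → A (k+1) < B k
  hBA : ∀ k, k + 2 < m → B k ≤ A (k+2)
  hBB : 1 < m → B (m-2) < B (m-1)

variable {P : G.Walk x y} {m : ℕ} {A B : ℕ → ℕ}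
  {LW : ∀ k, k < m → G.Walk (P.getVert (A k)) (P.getVert (B k))}

namespace VD

lemma neAB (vd : VD G P m A B LW) (k : ℕ) (hk : k < m) : A k ≠ B k :=
  fun h => vd.hne k hk (by rw [h])

lemma lenL (vd : VD G P m A B LW) (k : ℕ) (hk : k < m) : 1 ≤ (LW k hk).length := by
  by_contra h
  push_neg at h
  interval_cases hl : (LW k hk).length
  · exact vd.hne k hk ((LW k hk).eq_of_length_eq_zero hl)

lemma Bsucc (vd : VD G P m A B LW) (k : ℕ) (hk : k + 1 < m) : B k < B (k+1) := by
  rcases lt_or_ge (k+2) m with h | h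
  · exact lt_of_le_of_lt (vd.hBA k h) (vd.hAB (k+1) h)
  · have hk1 : k + 2 = m := by omega
    have := vd.hBB (by omega)
    rwa [show m - 2 = k from by omega, show m - 1 = k + 1 from by omega] at this

lemma Bmono (vd : VD G P m A B LW) {k l : ℕ} (hkl : k < l) (hl : l < m) : B k < B l := by
  induction l with
  | zero => omega
  | succ l ih =>
    rcases lt_or_ge k l with h | h
    · exact lt_trans (ih h (by omega)) (vd.Bsucc l hl)
    · have : k = l := by omega
      subst this
      exact vd.Bsucc k hl

lemma Asucc (vd : VD G P m A B LW) (k : ℕ) (hk : k + 1 < m) : A k < A (k+1) := by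
  cases k with
  | zero => exact vd.hA01 hk
  | succ k =>
    exact lt_of_lt_of_le (vd.hAB k (by omega)) (vd.hBA k (by omega))

lemma Amono (vd : VD G P m A B LW) {k l : ℕ} (hkl : k < l) (hl : l < m) : A k < A l := by
  induction l with
  | zero => omega
  | succ l ih =>
    rcases lt_or_ge k l with h | h
    · exact lt_trans (ih h (by omega)) (vd.Asucc l hl)
    · have : k = l := by omega
      subst this
      exact vd.Asucc k hl

lemma AltB (vd : VD G P m A B LW) (l : ℕ) (hl : l < m) : A l < B l := by
  rcases lt_or_ge (l+1) m with h | h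
  · exact lt_trans (vd.Asucc l h) (vd.hAB l h)
  · have hlm : l = m - 1 := by omega
    rcases Nat.lt_or_ge 1 m with h1 | h1
    · subst hlm
      have h2 : m - 1 = (m-2) + 1 := by omega
      calc A (m-1) < B (m-2) := by
              have := vd.hAB (m-2) (by omega)
              rwa [← h2] at this
        _ < B (m-1) := vd.hBB h1
    · have hm1 : m = 1 := by omega
      have : l = 0 := by omega
      subst this
      rw [vd.hA0]
      have hne := vd.hne 0 (by omega)
      rw [vd.hA0] at hne
      rcases Nat.eq_zero_or_pos (B 0) with h0 | h0
      · exact absurd (by rw [h0]) hne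
      · exact h0
/-- position of any support vertex of `P` -/
lemma pos_of_mem (vd : VD G P m A B LW) {z : V} (hz : z ∈ P.support) :
    ∃ k, k ≤ P.length ∧ P.getVert k = z :=
  let ⟨k, hk1, hk2⟩ := Walk.mem_support_iff_exists_getVert.1 hz
  ⟨k, hk2, hk1⟩

lemma posInj (vd : VD G P m A B LW) {k l : ℕ} (hk : k ≤ P.length) (hl : l ≤ P.length)
    (h : P.getVert k = P.getVert l) : k = l := getVert_inj vd.hP hk hl h

/-- The cycle consisting of `L k` together with the segment of `P` from `A k` to `B k`. -/
lemma cycleC (vd : VD G P m A B LW) (k : ℕ) (hk : k < m) (h2 : A k + 2 ≤ B k) :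
    ∃ (u : V) (C : G.Walk u u), C.IsCycle ∧ 1 + (B k - A k) ≤ C.length := by
  have hij : A k ≤ B k := by omega
  have hBn : B k ≤ P.length := vd.hB k hk
  set S : G.Walk (P.getVert (A k)) (P.getVert (B k)) := seg P (A k) (B k) hij with hS
  set T : G.Walk (P.getVert (B k)) (P.getVert (A k)) := (LW k hk).reverse with hT
  refine ⟨_, S.append T, ?_, ?_⟩
  · refine isCycle_append_of_meet (isPath_seg vd.hP _ _ hij) ((vd.hLp k hk).reverse) ?_ ?_ ?_
    · exact vd.hne k hk
    · have h1 := vd.lenL k hk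
      have : S.length = B k - A k := length_seg P hij hBn
      rw [this, Walk.length_reverse]
      omega
    · intro z hzS hzT
      rw [hT, Walk.support_reverse, List.mem_reverse] at hzT
      obtain ⟨l, hl1, hl2, hl3⟩ := (mem_support_seg P hij hBn).1 hzS
      exact vd.hLP k hk z hzT (hl3 ▸ getVert_mem_support' P l)
  · rw [Walk.length_append, hT, Walk.length_reverse, hS, length_seg P hij hBn]
    have := vd.lenL k hk
    omega

/-- The zigzag path through `L s, …, L j`, from `Y j` down to `Y (j-1)`. -/
lemma zigzag (vd : VD G P m A B LW) (s : ℕ) :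
    ∀ j, s + 1 ≤ j → j ≤ m - 1 →
    ∃ T : G.Walk (P.getVert (B j)) (P.getVert (B (j-1))),
      T.IsPath ∧
      (∀ k, k ≤ P.length → P.getVert k ∈ T.support →
        (A s ≤ k ∧ k ≤ A j) ∨ k = B (j-1) ∨ k = B j) ∧
      (∀ v ∈ T.support, v ∈ P.support ∨
        ∃ k, s ≤ k ∧ k ≤ j ∧ ∃ (hk : k < m), v ∈ (LW k hk).support) ∧
      ((j : ℤ) - s + 1 + ((A (s+1) : ℤ) - A s)
        + ∑ k ∈ Finset.Ico s (j-1), ((A (k+2) : ℤ) - (B k : ℤ)) ≤ (T.length : ℤ)) := by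
  intro j hj
  induction j, hj using Nat.le_induction with
  | base =>
    intro hjm
    simp only [Nat.add_sub_cancel]
    have hs1m : s + 1 < m := by omega
    have hsm : s < m := by omega
    have hAs1 : A s ≤ A (s+1) := (vd.Asucc s hs1m).le
    have hAn : A (s+1) ≤ P.length := vd.hA _ hs1m
    have hBsn : B s ≤ P.length := vd.hB s hsm
    have hB1n : B (s+1) ≤ P.length := vd.hB _ hs1m
    have hABs : A (s+1) < B s := vd.hAB s hs1m
    have hBs1 : B s < B (s+1) := vd.Bsucc s hs1m
    set Sg : G.Walk (P.getVert (A s)) (P.getVert (A (s+1))) := seg P (A s) (A (s+1)) hAs1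
      with hSgdef
    have hSgmem : ∀ z ∈ Sg.support, ∃ l, A s ≤ l ∧ l ≤ A (s+1) ∧ P.getVert l = z :=
      fun z hz => (mem_support_seg P hAs1 hAn).1 hz
    have hMpath : (Sg.reverse.append (LW s hsm)).IsPath := by
      refine isPath_append_of_meet ((isPath_seg vd.hP _ _ hAs1).reverse) (vd.hLp s hsm) ?_
      intro z hz1 hz2
      rw [Walk.support_reverse, List.mem_reverse] at hz1
      obtain ⟨l, hl1, hl2, hl3⟩ := hSgmem z hz1
      rcases vd.hLP s hsm z hz2 (hl3 ▸ getVert_mem_support' P l) with h | h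
      · exact h
      · exfalso
        have : l = B s := vd.posInj (by omega) hBsn (by rw [hl3, h])
        omega
    refine ⟨(LW (s+1) hs1m).reverse.append (Sg.reverse.append (LW s hsm)), ?_, ?_, ?_, ?_⟩
    · refine isPath_append_of_meet ((vd.hLp _ hs1m).reverse) hMpath ?_
      intro z hz1 hz2
      rw [Walk.support_reverse, List.mem_reverse] at hz1
      rw [Walk.mem_support_append_iff, Walk.support_reverse, List.mem_reverse] at hz2
      have hzP : z ∈ P.support := by
        rcases hz2 with hz2 | hz2
        · obtain ⟨l, _, _, hl3⟩ := hSgmem z hz2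
          exact hl3 ▸ getVert_mem_support' P l
        · rcases (vd.hLL (s+1) s hs1m hsm (by omega) z hz1 hz2).1 with h | h
          · exact h ▸ getVert_mem_support' P (A (s+1))
          · exact h ▸ getVert_mem_support' P (B (s+1))
      rcases vd.hLP (s+1) hs1m z hz1 hzP with h | h
      · exact h
      · exfalso
        rcases hz2 with hz2 | hz2
        · obtain ⟨l, hl1, hl2, hl3⟩ := hSgmem z hz2
          have : l = B (s+1) := vd.posInj (by omega) hB1n (by rw [hl3, h])
          omega
        · rcases (vd.hLL (s+1) s hs1m hsm (by omega) z hz1 hz2).2 with h' | h'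
          · have : A s = B (s+1) := vd.posInj (vd.hA s hsm) hB1n (by rw [← h', ← h])
            omega
          · have : B s = B (s+1) := vd.posInj hBsn hB1n (by rw [← h', ← h])
            omega
    · intro k hk hkmem
      rw [Walk.mem_support_append_iff, Walk.mem_support_append_iff,
        Walk.support_reverse, Walk.support_reverse, List.mem_reverse, List.mem_reverse]
        at hkmem
      rcases hkmem with h | h | h
      · rcases vd.hLP (s+1) hs1m _ h (getVert_mem_support' P k) with h' | h'
        · have : k = A (s+1) := vd.posInj hk hAn h'
          left; constructor <;> omega
        · right; right; exact vd.posInj hk hB1n h'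
      · obtain ⟨l, hl1, hl2, hl3⟩ := hSgmem _ h
        have : k = l := vd.posInj hk (by omega) (by rw [hl3])
        left; omega
      · rcases vd.hLP s hsm _ h (getVert_mem_support' P k) with h' | h'
        · have : k = A s := vd.posInj hk (vd.hA s hsm) h'
          left; constructor <;> omega
        · right; left; exact vd.posInj hk hBsn h'
    · intro v hv
      rw [Walk.mem_support_append_iff, Walk.mem_support_append_iff,
        Walk.support_reverse, Walk.support_reverse, List.mem_reverse, List.mem_reverse] at hv
      rcases hv with h | h | h
      · exact Or.inr ⟨s+1, by omega, by omega, hs1m, h⟩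
      · obtain ⟨l, _, _, hl3⟩ := hSgmem _ h
        exact Or.inl (hl3 ▸ getVert_mem_support' P l)
      · exact Or.inr ⟨s, by omega, by omega, hsm, h⟩
    · rw [Walk.length_append, Walk.length_append, Walk.length_reverse, Walk.length_reverse,
        hSgdef, length_seg P hAs1 hAn]
      have l1 := vd.lenL s hsm
      have l2 := vd.lenL (s+1) hs1m
      rw [Finset.Ico_self, Finset.sum_empty]
      push_cast
      omega
  | succ j hj ih =>
    intro hjm
    obtain ⟨T, hTpath, hTpos, hToff, hTlen⟩ := ih (by omega)
    simp only [Nat.add_sub_cancel]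
    have hj1m : j + 1 < m := by omega
    have hjltm : j < m := by omega
    have hjm1 : j - 1 < m := by omega
    have hBA' : B (j-1) ≤ A (j+1) := by
      have := vd.hBA (j-1) (by omega)
      rwa [show j - 1 + 2 = j + 1 from by omega] at this
    have hABj : A (j+1) < B j := vd.hAB j hj1m
    have hABj' : A j < B (j-1) := by
      have := vd.hAB (j-1) (by omega)
      rwa [show j - 1 + 1 = j from by omega] at this
    have hAn : A (j+1) ≤ P.length := vd.hA _ hj1m
    have hBn : B j ≤ P.length := vd.hB j hjltm
    have hB1n : B (j+1) ≤ P.length := vd.hB _ hj1m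
    have hBjn' : B (j-1) ≤ P.length := vd.hB _ hjm1
    have hBj1 : B j < B (j+1) := vd.Bsucc j hj1m
    have hBjj : B (j-1) < B j := vd.Bmono (by omega) hjltm
    have hAsj : A s < A j := vd.Amono (by omega) hjltm
    have hAjj : A j < A (j+1) := vd.Asucc j hj1m
    set Sg : G.Walk (P.getVert (B (j-1))) (P.getVert (A (j+1))) := seg P (B (j-1)) (A (j+1)) hBA'
      with hSgdef
    have hSgmem : ∀ z ∈ Sg.support, ∃ l, B (j-1) ≤ l ∧ l ≤ A (j+1) ∧ P.getVert l = z :=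
      fun z hz => (mem_support_seg P hBA' hAn).1 hz
    have hMpath : (Sg.reverse.append T.reverse).IsPath := by
      refine isPath_append_of_meet ((isPath_seg vd.hP _ _ hBA').reverse) hTpath.reverse ?_
      intro z hz1 hz2
      rw [Walk.support_reverse, List.mem_reverse] at hz1 hz2
      obtain ⟨l, hl1, hl2, hl3⟩ := hSgmem z hz1
      rcases hTpos l (by omega) (by rw [hl3]; exact hz2) with h | h | h
      · omega
      · rw [← hl3, h]
      · omega
    refine ⟨(LW (j+1) hj1m).reverse.append (Sg.reverse.append T.reverse), ?_, ?_, ?_, ?_⟩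
    · refine isPath_append_of_meet ((vd.hLp _ hj1m).reverse) hMpath ?_
      intro z hz1 hz2
      rw [Walk.support_reverse, List.mem_reverse] at hz1
      rw [Walk.mem_support_append_iff, Walk.support_reverse, Walk.support_reverse,
        List.mem_reverse, List.mem_reverse] at hz2
      have hzP : z ∈ P.support := by
        rcases hz2 with hz2 | hz2
        · obtain ⟨l, _, _, hl3⟩ := hSgmem z hz2
          exact hl3 ▸ getVert_mem_support' P l
        · rcases hToff z hz2 with h | ⟨k', hk'1, hk'2, hk', hzk'⟩
          · exact h
          · rcases (vd.hLL (j+1) k' hj1m hk' (by omega) z hz1 hzk').1 with h | h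
            · exact h ▸ getVert_mem_support' P (A (j+1))
            · exact h ▸ getVert_mem_support' P (B (j+1))
      rcases vd.hLP (j+1) hj1m z hz1 hzP with h | h
      · exact h
      · exfalso
        rcases hz2 with hz2 | hz2
        · obtain ⟨l, hl1, hl2, hl3⟩ := hSgmem z hz2
          have : l = B (j+1) := vd.posInj (by omega) hB1n (by rw [hl3, h])
          omega
        · rcases hTpos (B (j+1)) hB1n (by rw [← h]; exact hz2) with h' | h' | h'
          · omega
          · omega
          · omega
    · intro k hk hkmem
      rw [Walk.mem_support_append_iff, Walk.mem_support_append_iff,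
        Walk.support_reverse, Walk.support_reverse, Walk.support_reverse,
        List.mem_reverse, List.mem_reverse, List.mem_reverse] at hkmem
      rcases hkmem with h | h | h
      · rcases vd.hLP (j+1) hj1m _ h (getVert_mem_support' P k) with h' | h'
        · have : k = A (j+1) := vd.posInj hk hAn h'
          left; constructor <;> omega
        · right; right; exact vd.posInj hk hB1n h'
      · obtain ⟨l, hl1, hl2, hl3⟩ := hSgmem _ h
        have : k = l := vd.posInj hk (by omega) (by rw [hl3])
        left; constructor <;> omega
      · rcases hTpos k hk h with h' | h' | h'
        · left; constructor <;> omega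
        · left; constructor <;> omega
        · right; left; exact h'
    · intro v hv
      rw [Walk.mem_support_append_iff, Walk.mem_support_append_iff,
        Walk.support_reverse, Walk.support_reverse, Walk.support_reverse,
        List.mem_reverse, List.mem_reverse, List.mem_reverse] at hv
      rcases hv with h | h | h
      · exact Or.inr ⟨j+1, by omega, by omega, hj1m, h⟩
      · obtain ⟨l, _, _, hl3⟩ := hSgmem _ h
        exact Or.inl (hl3 ▸ getVert_mem_support' P l)
      · rcases hToff v h with h' | ⟨k', hk'1, hk'2, hk', hzk'⟩
        · exact Or.inl h'
        · exact Or.inr ⟨k', by omega, by omega, hk', hzk'⟩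
    · rw [Walk.length_append, Walk.length_append, Walk.length_reverse, Walk.length_reverse,
        Walk.length_reverse, hSgdef, length_seg P hBA' hAn]
      have l1 := vd.lenL (j+1) hj1m
      have e1 : j - 1 + 1 = j := by omega
      have hsum := Finset.sum_Ico_succ_top (f := fun k => ((A (k+2) : ℤ) - (B k : ℤ)))
        (a := s) (b := j - 1) (by omega)
      rw [e1, show j - 1 + 2 = j + 1 from by omega] at hsum
      rw [hsum]
      push_cast [Nat.cast_sub hBA']
      push_cast at hTlen
      omega

/-- The big cycle using `L s, …, L j`. -/
lemma cycleZ (vd : VD G P m A B LW) (s j : ℕ) (hs : s + 1 ≤ j) (hjm : j ≤ m - 1) :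
    ∃ (u : V) (C : G.Walk u u), C.IsCycle ∧
      ((j : ℤ) - s + 1 + ((A (s+1) : ℤ) - A s)
        + ∑ k ∈ Finset.Ico s (j-1), ((A (k+2) : ℤ) - (B k : ℤ))
        + ((B j : ℤ) - B (j-1)) ≤ (C.length : ℤ)) := by
  obtain ⟨T, hTpath, hTpos, hToff, hTlen⟩ := vd.zigzag s j hs hjm
  have hjm' : j < m := by omega
  have hjm1 : j - 1 < m := by omega
  have hBlt : B (j-1) < B j := vd.Bmono (by omega) hjm'
  have hBB' : B (j-1) ≤ B j := hBlt.le
  have hjs : (s : ℤ) + 1 ≤ (j : ℤ) := by exact_mod_cast hs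
  have hBn : B j ≤ P.length := vd.hB j hjm'
  have hABj' : A j < B (j-1) := by
    have := vd.hAB (j-1) (by omega)
    rwa [show j - 1 + 1 = j from by omega] at this
  have hsum0 : (0 : ℤ) ≤ ∑ k ∈ Finset.Ico s (j-1), ((A (k+2) : ℤ) - (B k : ℤ)) := by
    refine Finset.sum_nonneg fun k hk => ?_
    rw [Finset.mem_Ico] at hk
    have := vd.hBA k (by omega)
    omega
  have hA10 : (0 : ℤ) ≤ (A (s+1) : ℤ) - A s := by
    have := vd.Asucc s (by omega)
    omega
  have hT2 : 2 ≤ T.length := by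
    have : (2 : ℤ) ≤ T.length := by omega
    exact_mod_cast this
  refine ⟨_, T.append (seg P (B (j-1)) (B j) hBB'), ?_, ?_⟩
  · refine isCycle_append_of_meet hTpath (isPath_seg vd.hP _ _ hBB') ?_ ?_ ?_
    · intro h
      have := vd.posInj hBn (by omega) h
      omega
    · have := length_seg P hBB' hBn
      omega
    · intro z hz1 hz2
      obtain ⟨l, hl1, hl2, hl3⟩ := (mem_support_seg P hBB' hBn).1 hz2
      rcases hTpos l (by omega) (by rw [hl3]; exact hz1) with h | h | h
      · omega
      · right; rw [← hl3, h]
      · left; rw [← hl3, h]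
  · rw [Walk.length_append, length_seg P hBB' hBn]
    push_cast [Nat.cast_sub hBB']
    omega

/-- The telescoping inequality `Ψ`. -/
lemma psi (vd : VD G P m A B LW) : ∀ j, 2 ≤ j → j ≤ m - 2 →
    ((B j : ℤ) + B (j-1) - A 1 - A 2) ≤
      ∑ k ∈ Finset.Icc 1 j, ((B k : ℤ) - A k)
        + ∑ k ∈ Finset.Icc 1 (j-2), ((A (k+2) : ℤ) - B k) := by
  intro j hj
  induction j, hj using Nat.le_induction with
  | base =>
    intro h2
    have e1 : Finset.Icc (1:ℕ) 2 = {1, 2} := rfl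
    have e2 : Finset.Icc (1:ℕ) 0 = ∅ := rfl
    rw [show (2:ℕ) - 1 = 1 from rfl, show (2:ℕ) - 2 = 0 from rfl, e1, e2,
      Finset.sum_empty, Finset.sum_insert (by decide), Finset.sum_singleton]
    omega
  | succ j hj ih =>
    intro hjm
    have hIH := ih (by omega)
    have e1 : j + 1 - 1 = j := by omega
    have e2 : j + 1 - 2 = j - 1 := by omega
    rw [e1, e2]
    have hs1 := Finset.sum_Icc_succ_top (a := 1) (b := j)
      (f := fun k => ((B k : ℤ) - A k)) (by omega)
    have hs2 := Finset.sum_Icc_succ_top (a := 1) (b := j - 2)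
      (f := fun k => ((A (k+2) : ℤ) - B k)) (by omega)
    rw [show j - 2 + 1 = j - 1 from by omega, show j - 1 + 2 = j + 1 from by omega] at hs2
    rw [hs1, hs2]
    have hfin : (B (j+1) : ℤ) - B (j-1) ≤
        ((B (j+1) : ℤ) - A (j+1)) + ((A (j+1) : ℤ) - B (j-1)) := by omega
    linarith

/-- The key counting inequality. -/
lemma key (vd : VD G P m A B LW) (c : ℕ) (hc3 : 3 ≤ c)
    (hcmax : ∀ (u : V) (C : G.Walk u u), C.IsCycle → C.length ≤ c) :
    2 * (P.length + 1) + 4 * m ≤ (m + 1) * c + 6 := by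
  have hmaxN : ∀ (L : ℕ), (∃ (u : V) (C : G.Walk u u), C.IsCycle ∧ L ≤ C.length) → L ≤ c := by
    rintro L ⟨u, C, hC, hL⟩
    exact hL.trans (hcmax u C hC)
  have hmaxZ : ∀ (L : ℤ), (∃ (u : V) (C : G.Walk u u), C.IsCycle ∧ L ≤ (C.length : ℤ)) →
      L ≤ (c : ℤ) := by
    rintro L ⟨u, C, hC, hL⟩
    exact hL.trans (by exact_mod_cast hcmax u C hC)
  rcases Nat.lt_or_ge m 4 with hm4 | hm4
  · have hm0 := vd.hm
    have ha0 := vd.hA0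
    interval_cases m
    · -- m = 1
      have hbl := vd.hBlast
      norm_num at hbl
      rcases le_or_gt P.length 2 with hn | hn
      · omega
      · have h1 : 1 + (B 0 - A 0) ≤ c := by
          refine hmaxN _ (vd.cycleC 0 (by omega) ?_)
          rw [vd.hA0, hbl]; omega
        rw [vd.hA0, hbl] at h1
        omega
    · -- m = 2
      have hbl := vd.hBlast
      norm_num at hbl
      have hbb := vd.hBB (by omega)
      norm_num at hbb
      have hab0 := vd.hAB 0 (by omega)
      norm_num at hab0
      have ha01 := vd.hA01 (by omega)
      rw [vd.hA0] at ha01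
      have h1 : 1 + (B 0 - A 0) ≤ c := by
        refine hmaxN _ (vd.cycleC 0 (by omega) ?_)
        rw [vd.hA0]; omega
      have h2 : 1 + (B 1 - A 1) ≤ c := by
        refine hmaxN _ (vd.cycleC 1 (by omega) (by omega))
      have hZ : (1 : ℤ) - 0 + 1 + ((A 1 : ℤ) - A 0)
          + ∑ k ∈ Finset.Ico 0 (1-1), ((A (k+2) : ℤ) - (B k : ℤ))
          + ((B 1 : ℤ) - B 0) ≤ (c : ℤ) :=
        hmaxZ _ (vd.cycleZ 0 1 (by omega) (by omega))
      rw [show (1:ℕ) - 1 = 0 from rfl, Finset.Ico_self, Finset.sum_empty] at hZ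
      rw [vd.hA0] at hZ
      omega
    · -- m = 3
      have hbl := vd.hBlast
      norm_num at hbl
      have hab0 := vd.hAB 0 (by omega)
      norm_num at hab0
      have hab1 := vd.hAB 1 (by omega)
      norm_num at hab1
      have hba0 := vd.hBA 0 (by omega)
      norm_num at hba0
      have h1 : 1 + (B 1 - A 1) ≤ c := by
        refine hmaxN _ (vd.cycleC 1 (by omega) (by omega))
      have hZ : (2 : ℤ) - 0 + 1 + ((A 1 : ℤ) - A 0)
          + ∑ k ∈ Finset.Ico 0 (2-1), ((A (k+2) : ℤ) - (B k : ℤ))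
          + ((B 2 : ℤ) - B 1) ≤ (c : ℤ) :=
        hmaxZ _ (vd.cycleZ 0 2 (by omega) (by omega))
      rw [show (2:ℕ) - 1 = 1 from rfl, show Finset.Ico 0 1 = {0} from rfl,
        Finset.sum_singleton] at hZ
      rw [vd.hA0] at hZ
      norm_num at hZ
      omega
  · -- m ≥ 4
    have hm0 := vd.hm
    -- the big zigzag cycle
    have hZ : ((m - 1 : ℕ) : ℤ) - 0 + 1 + ((A 1 : ℤ) - A 0)
        + ∑ k ∈ Finset.Ico 0 (m - 2), ((A (k+2) : ℤ) - (B k : ℤ))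
        + ((B (m-1) : ℤ) - B (m-1-1)) ≤ (c : ℤ) := by
      have := hmaxZ _ (vd.cycleZ 0 (m-1) (by omega) (by omega))
      rwa [show m - 1 - 1 = m - 2 from by omega] at this
    rw [show m - 1 - 1 = m - 2 from by omega] at hZ
    -- the secondary zigzag cycle
    have hW : ((m - 2 : ℕ) : ℤ) - 1 + 1 + ((A 2 : ℤ) - A 1)
        + ∑ k ∈ Finset.Ico 1 (m - 3), ((A (k+2) : ℤ) - (B k : ℤ))
        + ((B (m-2) : ℤ) - B (m-3)) ≤ (c : ℤ) := by
      have := hmaxZ _ (vd.cycleZ 1 (m-2) (by omega) (by omega))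
      rwa [show m - 2 - 1 = m - 3 from by omega, show (1:ℕ) + 1 = 2 from rfl] at this
    -- the middle cycles
    have hCk : ∀ k ∈ Finset.Icc 1 (m-2), (1 : ℤ) + ((B k : ℤ) - A k) ≤ (c : ℤ) := by
      intro k hk
      rw [Finset.mem_Icc] at hk
      have habk : A k < B (k-1) := by
        have := vd.hAB (k-1) (by omega)
        rwa [show k - 1 + 1 = k from by omega] at this
      have hbak : B (k-1) ≤ A (k+1) := by
        have := vd.hBA (k-1) (by omega)
        rwa [show k - 1 + 2 = k + 1 from by omega] at this
      have habk1 : A (k+1) < B k := vd.hAB k (by omega)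
      have h2 : A k + 2 ≤ B k := by omega
      have := hmaxN _ (vd.cycleC k (by omega) h2)
      push_cast [Nat.cast_sub (by omega : A k ≤ B k)] at this ⊢
      omega
    have hD : ∑ k ∈ Finset.Icc 1 (m-2), ((1:ℤ) + ((B k : ℤ) - A k))
        ≤ ((Finset.Icc 1 (m-2)).card : ℤ) * (c : ℤ) := by
      have := Finset.sum_le_card_nsmul (Finset.Icc 1 (m-2))
        (fun k => (1:ℤ) + ((B k : ℤ) - A k)) (c : ℤ) hCk
      simpa [nsmul_eq_mul] using this
    rw [Nat.card_Icc] at hD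
    have hDsplit : ∑ k ∈ Finset.Icc 1 (m-2), ((1:ℤ) + ((B k : ℤ) - A k))
        = ((m - 2 : ℕ) : ℤ) + ∑ k ∈ Finset.Icc 1 (m-2), ((B k : ℤ) - A k) := by
      rw [Finset.sum_add_distrib, Finset.sum_const, Nat.card_Icc]
      have : ((m - 2 + 1 - 1) : ℕ) • (1:ℤ) = ((m - 2 : ℕ) : ℤ) := by
        rw [show m - 2 + 1 - 1 = m - 2 from by omega]; simp
      rw [this]
    rw [hDsplit] at hD
    -- psi
    have hpsi := vd.psi (m-2) (by omega) (le_refl _)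
    rw [show m - 2 - 1 = m - 3 from by omega, show m - 2 - 2 = m - 4 from by omega] at hpsi
    have hIccIco : Finset.Icc 1 (m-4) = Finset.Ico 1 (m-3) := by
      rw [show m - 3 = (m - 4) + 1 from by omega, Finset.Ico_add_one_right_eq_Icc]
    rw [hIccIco] at hpsi
    -- nonnegativity of the gap sum
    have hSZ : (0 : ℤ) ≤ ∑ k ∈ Finset.Ico 0 (m - 2), ((A (k+2) : ℤ) - (B k : ℤ)) := by
      refine Finset.sum_nonneg fun k hk => ?_
      rw [Finset.mem_Ico] at hk
      have := vd.hBA k (by omega)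
      omega
    -- final arithmetic
    have hbl : B (m-1) = P.length := vd.hBlast
    have hA0 : A 0 = 0 := vd.hA0
    have hcard : ((m - 2 + 1 - 1 : ℕ) : ℤ) = (m : ℤ) - 2 := by
      have : m - 2 + 1 - 1 = m - 2 := by omega
      rw [this]; omega
    rw [hcard] at hD
    have he1 : ((m - 1 : ℕ) : ℤ) = (m : ℤ) - 1 := by omega
    have he2 : ((m - 2 : ℕ) : ℤ) = (m : ℤ) - 2 := by omega
    rw [he1] at hZ
    rw [he2] at hW
    rw [hA0, hbl] at hZ
    rw [Nat.cast_zero] at hZ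
    have hid : ((m : ℤ) + 1) * (c : ℤ) = 2 * (c:ℤ) + ((m:ℤ) - 2) * (c:ℤ) + (c:ℤ) := by ring
    have hfin : (2:ℤ) * ((P.length : ℤ) + 1) + 4 * (m : ℤ) ≤ ((m:ℤ) + 1) * (c:ℤ) + 6 := by
      rw [hid]
      linarith [hZ, hW, hD, hpsi, hSZ]
    exact_mod_cast hfin

end VD

end VineData



/-- From a `Vine`, derive the key counting inequality. -/
lemma vine_key {V : Type*} {G : SimpleGraph V} {x y : V} {P : G.Walk x y}
    (hP : P.IsPath) {m : ℕ} (hvine : Vine G P m) (c : ℕ) (hc3 : 3 ≤ c)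
    (hcmax : ∀ (u : V) (C : G.Walk u u), C.IsCycle → C.length ≤ c) :
    2 * (P.length + 1) + 4 * m ≤ (m + 1) * c + 6 := by
  have hm := hvine.pos
  obtain ⟨X, Y, ix, iy, L, hLpath, hXY, hXp, hYp, hLPmeet, hLLmeet, hix0, hiylast,
    hix01, hxy, hyx, hylast⟩ := hvine.ex
  have hXle : ∀ i : Fin m, ix i ≤ P.length ∧ P.getVert (ix i) = X i :=
    fun i => (support_getElem?_iff P).1 (hXp i)
  have hYle : ∀ i : Fin m, iy i ≤ P.length ∧ P.getVert (iy i) = Y i :=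
    fun i => (support_getElem?_iff P).1 (hYp i)
  let A : ℕ → ℕ := fun k => if h : k < m then ix ⟨k, h⟩ else 0
  let B : ℕ → ℕ := fun k => if h : k < m then iy ⟨k, h⟩ else 0
  have hAdef : ∀ k (h : k < m), A k = ix ⟨k, h⟩ := fun k h => dif_pos h
  have hBdef : ∀ k (h : k < m), B k = iy ⟨k, h⟩ := fun k h => dif_pos h
  have hgetX : ∀ k (h : k < m), P.getVert (A k) = X ⟨k, h⟩ := fun k h => by
    rw [hAdef k h]; exact (hXle ⟨k, h⟩).2
  have hgetY : ∀ k (h : k < m), P.getVert (B k) = Y ⟨k, h⟩ := fun k h => by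
    rw [hBdef k h]; exact (hYle ⟨k, h⟩).2
  let LW : ∀ k, k < m → G.Walk (P.getVert (A k)) (P.getVert (B k)) := fun k h =>
    (L ⟨k, h⟩).copy (hgetX k h).symm (hgetY k h).symm
  have hsupLW : ∀ k (h : k < m), (LW k h).support = (L ⟨k, h⟩).support :=
    fun k h => Walk.support_copy _ _ _
  have vd : VD G P m A B LW := by
    refine ⟨hP, hm, ?_, ?_, ?_, ?_, ?_, ?_, ?_, ?_, ?_, ?_, ?_, ?_⟩
    · intro k h; rw [hAdef k h]; exact (hXle ⟨k, h⟩).1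
    · intro k h; rw [hBdef k h]; exact (hYle ⟨k, h⟩).1
    · intro k h
      exact (Walk.isPath_copy _ _ _).2 (hLpath ⟨k, h⟩)
    · intro k h
      rw [hgetX k h, hgetY k h]
      exact hXY ⟨k, h⟩
    · intro k h v hv hvP
      rw [hsupLW k h] at hv
      rw [hgetX k h, hgetY k h]
      exact hLPmeet ⟨k, h⟩ v hv hvP
    · intro k l hk hl hkl v hvk hvl
      rw [hsupLW k hk] at hvk
      rw [hsupLW l hl] at hvl
      rw [hgetX k hk, hgetY k hk, hgetX l hl, hgetY l hl]
      exact hLLmeet ⟨k, hk⟩ ⟨l, hl⟩ (by simp [Fin.ext_iff, hkl]) v hvk hvl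
    · rw [hAdef 0 hm]; exact hix0
    · rw [hBdef (m-1) (by omega)]; exact hiylast
    · intro h; rw [hAdef 0 hm, hAdef 1 h]; exact hix01 h
    · intro k h
      rw [hAdef (k+1) h, hBdef k (by omega)]
      exact hxy ⟨k, by omega⟩ h
    · intro k h
      rw [hBdef k (by omega), hAdef (k+2) h]
      exact hyx ⟨k, by omega⟩ h
    · intro h
      rw [hBdef (m-2) (by omega), hBdef (m-1) (by omega)]
      exact hylast h
  exact vd.key c hc3 hcmax

end StmtAux

/-- **Lemma 2.** If a finite simple graph `G` has a longest path `P`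
with `p` vertices carrying a vine of `m` paths, then the circumference `c`
satisfies `c ≥ (2p − 10)/(m + 1) + 4`. -/
theorem stmt_7 {V : Type*} [Fintype V] (G : SimpleGraph V)
    (x y : V) (P : G.Walk x y) (hP : P.IsPath)
    (hPmax : ∀ (u v : V) (Q : G.Walk u v), Q.IsPath → Q.length ≤ P.length)
    (p c : ℕ) (hp : p = P.length + 1)
    (hc : ∃ (u : V) (C : G.Walk u u), C.IsCycle ∧ C.length = c)
    (hcmax : ∀ (u : V) (C : G.Walk u u), C.IsCycle → C.length ≤ c)
    (m : ℕ) (hvine : Vine G P m) :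
    (2 * (p : ℝ) - 10) / ((m : ℝ) + 1) + 4 ≤ (c : ℝ) := by
  have hc3 : 3 ≤ c := by
    obtain ⟨u, C, hC, hlen⟩ := hc
    have := hC.three_le_length
    omega
  have hkey := StmtAux.vine_key hP hvine c hc3 hcmax
  have hk' : ((2 * (P.length + 1) + 4 * m : ℕ) : ℝ) ≤ (((m + 1) * c + 6 : ℕ) : ℝ) :=
    Nat.cast_le.2 hkey
  push_cast at hk'
  have hm1 : (0:ℝ) < (m : ℝ) + 1 := by positivity
  have h2 : 2 * (p : ℝ) - 10 ≤ ((c : ℝ) - 4) * ((m : ℝ) + 1) := by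
    rw [hp]
    push_cast
    nlinarith [hk']
  have h3 : (2 * (p : ℝ) - 10) / ((m : ℝ) + 1) ≤ (c : ℝ) - 4 := (div_le_iff₀ hm1).2 h2
  linarith
end

section
/- For every integer δ ≥ 2, the graph G = K₂ + 3K_{δ−1}, obtained as the join of the complete graph K₂ with the disjoint union of three copies of the complete graph K_{δ−1}, has n = 3δ − 1 vertices, minimum degree δ, contains a Hamilton path (so p = n = 3δ − 1), and has circumference c = 2δ. -/
open SimpleGraph

def graphJoin {α β : Type*} (A : SimpleGraph α) (B : SimpleGraph β) :
    SimpleGraph (α ⊕ β) where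
  Adj u v :=
    match u, v with
    | Sum.inl a, Sum.inl a' => A.Adj a a'
    | Sum.inr b, Sum.inr b' => B.Adj b b'
    | Sum.inl _, Sum.inr _ => True
    | Sum.inr _, Sum.inl _ => True
  symm := ⟨by rintro (a | b) (a' | b') h <;> simp_all <;> exact h.symm⟩
  loopless := ⟨by rintro (a | b) h <;> simp_all⟩

def threeCliques (k : ℕ) : SimpleGraph (Fin 3 × Fin k) where
  Adj u v := u.1 = v.1 ∧ u.2 ≠ v.2
  symm := ⟨by rintro ⟨i, a⟩ ⟨j, b⟩ ⟨h1, h2⟩; exact ⟨h1.symm, h2.symm⟩⟩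
  loopless := ⟨by rintro ⟨i, a⟩ ⟨-, h⟩; exact h rfl⟩

abbrev GG (k : ℕ) := graphJoin (⊤ : SimpleGraph (Fin 2)) (threeCliques k)

def seg (k : ℕ) (i : Fin 3) : List (Fin 2 ⊕ Fin 3 × Fin k) :=
  (List.finRange k).map (fun j => Sum.inr (i, j))

lemma mem_seg {k : ℕ} {i : Fin 3} {w : Fin 2 ⊕ Fin 3 × Fin k} :
    w ∈ seg k i ↔ ∃ j, w = Sum.inr (i, j) := by
  simp [seg, eq_comm]

lemma seg_nodup (k : ℕ) (i : Fin 3) : (seg k i).Nodup :=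
  (List.nodup_finRange k).map (fun a b h => congrArg Prod.snd (Sum.inr.inj h))

lemma seg_length (k : ℕ) (i : Fin 3) : (seg k i).length = k := by simp [seg]

lemma seg_ne_nil {k : ℕ} (hk : 1 ≤ k) (i : Fin 3) : seg k i ≠ [] := by
  intro h
  have := seg_length k i
  rw [h] at this
  simp at this
  omega

lemma seg_chain (k : ℕ) (i : Fin 3) : (seg k i).Chain' (GG k).Adj := by
  rw [seg]
  exact (List.isChain_map _).mpr ((List.Pairwise.isChain (List.nodup_finRange k)).imp (fun {a b} h => ⟨rfl, h⟩))

lemma adj_of_inl_ne {k : ℕ} (x : Fin 2) {w : Fin 2 ⊕ Fin 3 × Fin k}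
    (h : ∀ y : Fin 2, w = Sum.inl y → x ≠ y) : (GG k).Adj (Sum.inl x) w := by
  rcases w with y | ⟨j, b⟩
  · exact h y rfl
  · trivial

lemma adj_seg_left {k : ℕ} {i : Fin 3} {w u : Fin 2 ⊕ Fin 3 × Fin k} (hw : w ∈ seg k i)
    (hu : ∀ j b, u ≠ Sum.inr (j, b)) : (GG k).Adj w u := by
  obtain ⟨j, rfl⟩ := mem_seg.mp hw
  rcases u with y | ⟨j', b⟩
  · trivial
  · exact absurd rfl (hu j' b)

def hamList (k : ℕ) : List (Fin 2 ⊕ Fin 3 × Fin k) :=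
  seg k 0 ++ Sum.inl 0 :: (seg k 1 ++ Sum.inl 1 :: seg k 2)

lemma hamList_length (k : ℕ) : (hamList k).length = 3 * k + 2 := by
  simp [hamList, seg]
  omega

lemma hamList_chain (k : ℕ) : (hamList k).Chain' (GG k).Adj := by
  refine List.IsChain.append (seg_chain k 0) ?_ ?_
  · rw [List.isChain_cons]
    constructor
    · intro y hy
      have hy' := List.mem_of_mem_head? hy
      refine adj_of_inl_ne 0 ?_
      rintro z rfl
      simp only [List.mem_append, List.mem_cons] at hy'
      rcases hy' with h | h | h
      · obtain ⟨j, hj⟩ := mem_seg.mp h; exact absurd hj (by simp)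
      · intro h0; rw [← h0] at h; exact absurd (Sum.inl.inj h) (by decide)
      · obtain ⟨j, hj⟩ := mem_seg.mp h; exact absurd hj (by simp)
    · refine List.IsChain.append (seg_chain k 1) ?_ ?_
      · rw [List.isChain_cons]
        refine ⟨?_, seg_chain k 2⟩
        intro y hy
        have hy' := List.mem_of_mem_head? hy
        refine adj_of_inl_ne 1 ?_
        rintro z rfl
        obtain ⟨j, hj⟩ := mem_seg.mp hy'
        exact absurd hj (by simp)
      · intro x hx y hy
        have hx' := List.mem_of_mem_getLast? hx
        have hy' := List.mem_of_mem_head? hy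
        simp only [List.head?_cons, Option.mem_some_iff] at hy
        refine adj_seg_left hx' ?_
        rintro j b h
        rw [← hy] at h
        exact absurd h (by simp)
  · intro x hx y hy
    have hx' := List.mem_of_mem_getLast? hx
    simp only [List.head?_cons, Option.mem_some_iff] at hy
    refine adj_seg_left hx' ?_
    rintro j b h
    rw [← hy] at h
    exact absurd h (by simp)

lemma hamList_nodup (k : ℕ) : (hamList k).Nodup := by
  rw [hamList]
  rw [List.nodup_append']
  refine ⟨seg_nodup k 0, ?_, ?_⟩
  · rw [List.nodup_cons, List.nodup_append']
    refine ⟨?_, seg_nodup k 1, ?_, ?_⟩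
    · simp only [List.mem_append, List.mem_cons]
      rintro (h | h | h)
      · obtain ⟨j, hj⟩ := mem_seg.mp h; exact absurd hj (by simp)
      · exact absurd (Sum.inl.inj h) (by decide)
      · obtain ⟨j, hj⟩ := mem_seg.mp h; exact absurd hj (by simp)
    · rw [List.nodup_cons]
      refine ⟨?_, seg_nodup k 2⟩
      intro h
      obtain ⟨j, hj⟩ := mem_seg.mp h
      exact absurd hj (by simp)
    · intro w hw
      obtain ⟨j, rfl⟩ := mem_seg.mp hw
      simp only [List.mem_cons]
      rintro (h | h)
      · exact absurd h (by simp)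
      · obtain ⟨j', hj⟩ := mem_seg.mp h
        injection hj with h'
        have hf : (1 : Fin 3) = 2 := congrArg Prod.fst h'
        exact absurd hf (by decide)
  · intro w hw
    obtain ⟨j, rfl⟩ := mem_seg.mp hw
    simp only [List.mem_cons, List.mem_append]
    rintro (h | h | h | h)
    · exact absurd h (by simp)
    · obtain ⟨j', hj⟩ := mem_seg.mp h
      injection hj with h'
      have hf : (0 : Fin 3) = 1 := congrArg Prod.fst h'
      exact absurd hf (by decide)
    · exact absurd h (by simp)
    · obtain ⟨j', hj⟩ := mem_seg.mp h
      injection hj with h'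
      have hf : (0 : Fin 3) = 2 := congrArg Prod.fst h'
      exact absurd hf (by decide)

def cycList (k : ℕ) : List (Fin 2 ⊕ Fin 3 × Fin k) :=
  seg k 0 ++ Sum.inl 1 :: (seg k 1 ++ [Sum.inl 0])

lemma cycList_length (k : ℕ) : (cycList k).length = 2 * k + 2 := by
  simp [cycList, seg]
  omega

lemma cycList_chain (k : ℕ) : (cycList k).Chain' (GG k).Adj := by
  refine List.IsChain.append (seg_chain k 0) ?_ ?_
  · rw [List.isChain_cons]
    constructor
    · intro y hy
      have hy' := List.mem_of_mem_head? hy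
      refine adj_of_inl_ne 1 ?_
      rintro z rfl
      rw [List.mem_append] at hy'
      rcases hy' with h | h
      · obtain ⟨j, hj⟩ := mem_seg.mp h; exact absurd hj (by simp)
      · rw [List.mem_singleton] at h
        intro h0; rw [← h0] at h; exact absurd (Sum.inl.inj h) (by decide)
    · refine List.IsChain.append (seg_chain k 1) ?_ ?_
      · exact List.isChain_singleton _
      · intro x hx y hy
        have hx' := List.mem_of_mem_getLast? hx
        simp only [List.head?_cons, Option.mem_some_iff] at hy
        refine adj_seg_left hx' ?_
        rintro j b h
        rw [← hy] at h
        exact absurd h (by simp)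
  · intro x hx y hy
    have hx' := List.mem_of_mem_getLast? hx
    simp only [List.head?_cons, Option.mem_some_iff] at hy
    refine adj_seg_left hx' ?_
    rintro j b h
    rw [← hy] at h
    exact absurd h (by simp)

lemma cycList_nodup (k : ℕ) : (cycList k).Nodup := by
  rw [cycList, List.nodup_append']
  refine ⟨seg_nodup k 0, ?_, ?_⟩
  · rw [List.nodup_cons, List.nodup_append']
    refine ⟨?_, seg_nodup k 1, ?_, ?_⟩
    · simp only [List.mem_append, List.mem_singleton]
      rintro (h | h)
      · obtain ⟨j, hj⟩ := mem_seg.mp h; exact absurd hj (by simp)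
      · exact absurd (Sum.inl.inj h) (by decide)
    · exact List.nodup_singleton _
    · intro w hw
      obtain ⟨j, rfl⟩ := mem_seg.mp hw
      simp
  · intro w hw
    obtain ⟨j, rfl⟩ := mem_seg.mp hw
    simp only [List.mem_cons, List.mem_append, List.mem_singleton]
    rintro (h | h | h)
    · exact absurd h (by simp)
    · obtain ⟨j', hj⟩ := mem_seg.mp h
      injection hj with h'
      have hf : (0 : Fin 3) = 1 := congrArg Prod.fst h'
      exact absurd hf (by decide)
    · exact absurd h (by simp)


lemma path_of_chain {V : Type*} {G : SimpleGraph V} :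
    ∀ (l : List V) (a : V), (a::l).Chain' G.Adj → (a::l).Nodup →
      ∃ (v : V) (p : G.Walk a v), p.IsPath ∧ p.support = a :: l := by
  intro l
  induction l with
  | nil => intro a _ _; exact ⟨a, Walk.nil, Walk.IsPath.nil, rfl⟩
  | cons b t ih =>
    intro a hc hn
    obtain ⟨hab, hc'⟩ := List.isChain_cons_cons.mp hc
    obtain ⟨v, p, hp, hs⟩ := ih b hc' hn.of_cons
    refine ⟨v, Walk.cons hab p, ?_, by simp [hs]⟩
    rw [Walk.cons_isPath_iff]
    refine ⟨hp, ?_⟩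
    rw [hs]
    exact (List.nodup_cons.mp hn).1

lemma edge_last_head {V : Type*} {G : SimpleGraph V} :
    ∀ {a v : V} (p : G.Walk a v), p.IsPath → s(v, a) ∈ p.edges → p.length = 1 := by
  intro a v p
  induction p with
  | nil => simp
  | @cons u b v h q ih =>
    intro hp he
    simp only [Walk.edges_cons, List.mem_cons] at he
    rcases he with he | he
    · rw [Sym2.eq_iff] at he
      rcases he with ⟨h1, h2⟩ | ⟨h1, h2⟩
      · exact absurd h (by subst h2; exact G.irrefl)
      · subst h1
        have hq : q = Walk.nil := (Walk.isPath_iff_eq_nil (p := q)).mp ((Walk.cons_isPath_iff h q).mp hp).1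
        simp [hq]
    · exact absurd (Walk.fst_mem_support_of_mem_edges q (by rwa [Sym2.eq_swap] at he))
        ((Walk.cons_isPath_iff h q).mp hp).2



lemma dart_of_prop {V : Type*} {G : SimpleGraph V} (P : V → Prop) :
    ∀ {u v : V} (p : G.Walk u v), (∃ w ∈ p.support, P w) → ¬ P u →
      ∃ d ∈ p.darts, P d.snd ∧ ¬ P d.fst := by
  intro u v p
  induction p with
  | nil => rintro ⟨w, hw, hPw⟩ hu; simp at hw; exact absurd (hw ▸ hPw) hu
  | @cons u b v h q ih =>
    rintro ⟨w, hw, hPw⟩ hu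
    by_cases hPb : P b
    · exact ⟨⟨(u, b), h⟩, by simp, hPb, hu⟩
    · simp only [Walk.support_cons, List.mem_cons] at hw
      rcases hw with rfl | hw
      · exact absurd hPw hu
      · obtain ⟨d, hd, hds⟩ := ih ⟨w, hw, hPw⟩ hPb
        exact ⟨d, by simp [hd], hds⟩

lemma cycle_dropLast_nodup {V : Type*} {G : SimpleGraph V} {u : V} {C : G.Walk u u}
    (hC : C.IsCycle) : C.support.dropLast.Nodup := by
  have htail : C.support.tail.Nodup := hC.support_nodup
  have hsup : C.support = u :: C.support.tail := by rw [← Walk.support_eq_cons]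
  have hne : C.support.tail ≠ [] := by
    intro h
    have := Walk.length_support C
    rw [hsup, h] at this
    simp at this
    exact hC.ne_nil (Walk.nil_iff_eq_nil.mp this)
  have hlast : C.support.tail.getLast hne = u := by
    rw [List.getLast_tail]
    exact Walk.getLast_support C
  have hdl := List.dropLast_append_getLast hne
  rw [hlast] at hdl
  have hu : u ∉ C.support.tail.dropLast := by
    intro hu
    have := htail
    rw [← hdl] at this
    rcases List.nodup_append'.mp this with ⟨-, -, hdisj⟩
    exact hdisj hu (by simp)
  have : C.support.dropLast = u :: C.support.tail.dropLast := by
    conv_lhs => rw [hsup]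
    obtain ⟨b, t, ht⟩ := List.exists_cons_of_ne_nil hne
    rw [ht]
    rfl
  rw [this]
  exact List.nodup_cons.mpr ⟨hu, htail.sublist (List.dropLast_sublist _)⟩

lemma cycle_fst_inj {V : Type*} {G : SimpleGraph V} {u : V} {C : G.Walk u u}
    (hC : C.IsCycle) {d d' : G.Dart} (hd : d ∈ C.darts) (hd' : d' ∈ C.darts)
    (h : d.fst = d'.fst) : d = d' := by
  have hdartsnd : C.darts.Nodup := List.Nodup.of_map Dart.edge hC.edges_nodup
  have hn : (C.darts.map (·.fst)).Nodup := by
    rw [Walk.map_fst_darts]; exact cycle_dropLast_nodup hC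
  exact (List.nodup_map_iff_inj_on hdartsnd).mp hn d hd d' hd' h

lemma walk_constant (k : ℕ) :
    ∀ {u v : Fin 2 ⊕ Fin 3 × Fin k} (p : (GG k).Walk u v),
      (∀ w ∈ p.support, ∀ x : Fin 2, w ≠ Sum.inl x) →
      ∀ (j : Fin 3) (a : Fin k), u = Sum.inr (j, a) →
      ∀ w ∈ p.support, ∃ b, w = Sum.inr (j, b) := by
  intro u v p
  induction p with
  | nil =>
    rintro _ j a rfl w hw
    simp at hw
    exact ⟨a, hw⟩
  | @cons u c v h q ih =>
    rintro hinr j a rfl w hw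
    obtain ⟨j', b', hc⟩ : ∃ j' b', c = Sum.inr (j', b') := by
      rcases c with x | ⟨j', b'⟩
      · exact absurd rfl (hinr (Sum.inl x) (by simp) x)
      · exact ⟨j', b', rfl⟩
    subst hc
    have hjj : j = j' := h.1
    subst hjj
    simp only [Walk.support_cons, List.mem_cons] at hw
    rcases hw with rfl | hw
    · exact ⟨a, rfl⟩
    · exact ih (fun w hw x => hinr w (by simp [hw]) x) j b' rfl w hw

lemma cycle_bound_core (k : ℕ) (x : Fin 2) (C : (GG k).Walk (Sum.inl x) (Sum.inl x))
    (hC : C.IsCycle) : C.length ≤ 2 * k + 2 := by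
  -- find a clique missing from the support
  have hmiss : ∃ i : Fin 3, ∀ a : Fin k, Sum.inr (i, a) ∉ C.support := by
    by_contra h
    push_neg at h
    have key : ∀ i : Fin 3, ∃ (y : Fin 2) (d : (GG k).Dart), d ∈ C.darts ∧
        d.fst = Sum.inl y ∧ ∃ a, d.snd = Sum.inr (i, a) := by
      intro i
      obtain ⟨a, ha⟩ := h i
      obtain ⟨d, hd, hds, hdf⟩ := dart_of_prop (fun w => ∃ a, w = Sum.inr (i, a)) C
        ⟨Sum.inr (i, a), ha, a, rfl⟩ (by simp)
      obtain ⟨a', ha'⟩ := hds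
      rcases hfst : d.fst with y | ⟨j, b⟩
      · exact ⟨y, d, hd, hfst, a', ha'⟩
      · exfalso
        have hadj := d.adj
        rw [hfst, ha'] at hadj
        have hji : j = i := hadj.1
        subst hji
        exact hdf ⟨b, hfst⟩
    obtain ⟨y0, d0, hd0, hf0, a0, hs0⟩ := key 0
    obtain ⟨y1, d1, hd1, hf1, a1, hs1⟩ := key 1
    obtain ⟨y2, d2, hd2, hf2, a2, hs2⟩ := key 2
    have hne : ∀ (i j : Fin 3) (yi yj : Fin 2) (di dj : (GG k).Dart),
        di ∈ C.darts → dj ∈ C.darts → di.fst = Sum.inl yi → dj.fst = Sum.inl yj →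
        (∃ a, di.snd = Sum.inr (i, a)) → (∃ a, dj.snd = Sum.inr (j, a)) → i ≠ j → yi ≠ yj := by
      rintro i j yi yj di dj hdi hdj hfi hfj ⟨ai, hsi⟩ ⟨aj, hsj⟩ hij rfl
      have : di = dj := cycle_fst_inj hC hdi hdj (by rw [hfi, hfj])
      rw [this, hsj] at hsi
      exact hij (congrArg Prod.fst (Sum.inr.inj hsi)).symm
    have h01 : y0 ≠ y1 := hne 0 1 y0 y1 d0 d1 hd0 hd1 hf0 hf1 ⟨a0, hs0⟩ ⟨a1, hs1⟩ (by decide)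
    have h02 : y0 ≠ y2 := hne 0 2 y0 y2 d0 d2 hd0 hd2 hf0 hf2 ⟨a0, hs0⟩ ⟨a2, hs2⟩ (by decide)
    have h12 : y1 ≠ y2 := hne 1 2 y1 y2 d1 d2 hd1 hd2 hf1 hf2 ⟨a1, hs1⟩ ⟨a2, hs2⟩ (by decide)
    have := y0.isLt; have := y1.isLt; have := y2.isLt
    have e01 : y0.1 ≠ y1.1 := fun h => h01 (Fin.val_injective h)
    have e02 : y0.1 ≠ y2.1 := fun h => h02 (Fin.val_injective h)
    have e12 : y1.1 ≠ y2.1 := fun h => h12 (Fin.val_injective h)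
    omega
  obtain ⟨i, hi⟩ := hmiss
  classical
  have htail : C.support.tail.Nodup := hC.support_nodup
  have hlen : C.length = C.support.tail.length := by
    have := Walk.length_support C
    have := List.length_tail (l := C.support)
    omega
  have hsubset : C.support.tail.toFinset ⊆
      Finset.univ \ Finset.image (fun a : Fin k => (Sum.inr (i, a) : Fin 2 ⊕ Fin 3 × Fin k)) Finset.univ := by
    intro w hw
    simp only [List.mem_toFinset] at hw
    have hwsup : w ∈ C.support := List.mem_of_mem_tail hw
    simp only [Finset.mem_sdiff, Finset.mem_univ, true_and, Finset.mem_image, not_exists]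
    intro a heq
    exact hi a (by rw [heq]; exact hwsup)
  have hcard : (Finset.univ \ Finset.image (fun a : Fin k => (Sum.inr (i, a) : Fin 2 ⊕ Fin 3 × Fin k)) Finset.univ).card = 2 * k + 2 := by
    rw [Finset.card_sdiff_of_subset (Finset.subset_univ _)]
    rw [Finset.card_image_of_injective _ (fun a b h => congrArg Prod.snd (Sum.inr.inj h))]
    simp [Finset.card_univ]
    omega
  calc C.length = C.support.tail.toFinset.card := by
        rw [hlen, List.toFinset_card_of_nodup htail]
    _ ≤ 2 * k + 2 := hcard ▸ Finset.card_le_card hsubset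

lemma cycle_bound (k : ℕ) (u : Fin 2 ⊕ Fin 3 × Fin k) (C : (GG k).Walk u u)
    (hC : C.IsCycle) : C.length ≤ 2 * k + 2 := by
  rcases Classical.em (∃ x : Fin 2, Sum.inl x ∈ C.support) with hinl | hinl
  · obtain ⟨x, hx⟩ := hinl
    have hrot := hC.rotate hx
    have hlen : (C.rotate _ hx).length = C.length := by
      have h1 := (Walk.rotate_darts C _ hx).perm.length_eq
      rw [Walk.length_darts, Walk.length_darts] at h1
      exact h1
    rw [← hlen]
    exact cycle_bound_core k x (C.rotate _ hx) hrot
  · push_neg at hinl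
    have hne : ∀ w ∈ C.support, ∀ x : Fin 2, w ≠ Sum.inl x := by
      intro w hw x heq
      exact hinl x (heq ▸ hw)
    obtain ⟨j, a, rfl⟩ : ∃ j a, u = Sum.inr (j, a) := by
      rcases u with x | ⟨j, a⟩
      · exact absurd rfl (hne _ C.start_mem_support x)
      · exact ⟨j, a, rfl⟩
    have hconst := walk_constant k C hne j a rfl
    have htail : C.support.tail.Nodup := hC.support_nodup
    have hlen : C.length = C.support.tail.length := by
      have := Walk.length_support C
      have := List.length_tail (l := C.support)
      omega
    have hsubset : C.support.tail.toFinset ⊆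
        Finset.image (fun b : Fin k => (Sum.inr (j, b) : Fin 2 ⊕ Fin 3 × Fin k)) Finset.univ := by
      intro w hw
      simp only [List.mem_toFinset] at hw
      obtain ⟨b, rfl⟩ := hconst w (List.mem_of_mem_tail hw)
      exact Finset.mem_image.mpr ⟨b, Finset.mem_univ _, rfl⟩
    have hcard : (Finset.image (fun b : Fin k => (Sum.inr (j, b) : Fin 2 ⊕ Fin 3 × Fin k)) Finset.univ).card = k := by
      rw [Finset.card_image_of_injective _ (fun a b h => congrArg Prod.snd (Sum.inr.inj h))]
      simp
    have := Finset.card_le_card hsubset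
    rw [hcard] at this
    rw [hlen, ← List.toFinset_card_of_nodup htail]
    omega



lemma degree_inr (k : ℕ) (hk : 1 ≤ k) [DecidableRel (GG k).Adj] (i : Fin 3) (a : Fin k) :
    (GG k).degree (Sum.inr (i, a)) = k + 1 := by
  have hnf : (GG k).neighborFinset (Sum.inr (i, a)) =
      Finset.univ.disjSum ({i} ×ˢ (Finset.univ.erase a)) := by
    ext w
    rcases w with x | ⟨j, b⟩
    · simp [mem_neighborFinset]
      show (GG k).Adj _ _
      trivial
    · simp only [mem_neighborFinset, Finset.inr_mem_disjSum, Finset.mem_product,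
        Finset.mem_singleton, Finset.mem_erase, Finset.mem_univ, and_true]
      show (i = j ∧ a ≠ b) ↔ (j = i ∧ b ≠ a)
      constructor
      · rintro ⟨h1, h2⟩; exact ⟨h1.symm, h2.symm⟩
      · rintro ⟨h1, h2⟩; exact ⟨h1.symm, h2.symm⟩
  rw [← card_neighborFinset_eq_degree, hnf, Finset.card_disjSum, Finset.card_product,
    Finset.card_singleton, Finset.card_erase_of_mem (Finset.mem_univ a)]
  simp
  omega

lemma degree_inl (k : ℕ) [DecidableRel (GG k).Adj] (x : Fin 2) :
    (GG k).degree (Sum.inl x) = 3 * k + 1 := by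
  have hnf : (GG k).neighborFinset (Sum.inl x) = (({x} : Finset (Fin 2))ᶜ).disjSum Finset.univ := by
    ext w
    rcases w with y | ⟨j, b⟩
    · simp only [mem_neighborFinset, Finset.inl_mem_disjSum, Finset.mem_compl,
        Finset.mem_singleton]
      show x ≠ y ↔ ¬ y = x
      exact ne_comm
    · simp only [mem_neighborFinset, Finset.inr_mem_disjSum, Finset.mem_univ, iff_true]
      show True
      trivial
  rw [← card_neighborFinset_eq_degree, hnf, Finset.card_disjSum, Finset.card_compl]
  simp
  omega

lemma minDeg (k : ℕ) (hk : 1 ≤ k) [DecidableRel (GG k).Adj] : (GG k).minDegree = k + 1 := by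
  have h1 : (GG k).minDegree ≤ k + 1 := by
    have := minDegree_le_degree (GG k) (Sum.inr (0, ⟨0, hk⟩))
    rwa [degree_inr k hk] at this
  have h2 : k + 1 ≤ (GG k).minDegree := by
    apply le_minDegree_of_forall_le_degree
    intro v
    rcases v with x | ⟨i, a⟩
    · rw [degree_inl]; omega
    · rw [degree_inr k hk]
  omega


lemma ham_exists (k : ℕ) :
    ∃ (u v : Fin 2 ⊕ Fin 3 × Fin k) (P : (GG k).Walk u v),
      P.IsPath ∧ P.length + 1 = 3 * k + 2 := by
  have hne : hamList k ≠ [] := by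
    intro h
    have := hamList_length k
    rw [h] at this
    simp at this
  obtain ⟨a, l', hl⟩ := List.exists_cons_of_ne_nil hne
  obtain ⟨v, p, hp, hs⟩ := path_of_chain l' a (hl ▸ hamList_chain k) (hl ▸ hamList_nodup k)
  refine ⟨a, v, p, hp, ?_⟩
  have := Walk.length_support p
  rw [hs, ← hl, hamList_length k] at this
  omega

lemma cyc_exists (k : ℕ) (hk : 1 ≤ k) :
    ∃ (u : Fin 2 ⊕ Fin 3 × Fin k) (C : (GG k).Walk u u),
      C.IsCycle ∧ C.length = 2 * k + 2 := by
  have hcne : cycList k ≠ [] := by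
    intro h
    have := cycList_length k
    rw [h] at this
    simp at this
  obtain ⟨a, l', hl⟩ := List.exists_cons_of_ne_nil hcne
  obtain ⟨v, p, hp, hs⟩ := path_of_chain l' a (hl ▸ cycList_chain k) (hl ▸ cycList_nodup k)
  have hsupp : p.support = cycList k := by rw [hs, hl]
  have hplen : p.length + 1 = 2 * k + 2 := by
    have := Walk.length_support p
    rw [hsupp, cycList_length k] at this
    omega
  -- v = Sum.inl 0
  have hv : v = Sum.inl 0 := by
    have h1 : p.support.getLast? = some v := by
      rw [List.getLast?_eq_getLast (p.support_ne_nil), Walk.getLast_support]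
    rw [hsupp] at h1
    have h2 : cycList k = (seg k 0 ++ Sum.inl 1 :: seg k 1) ++ [Sum.inl 0] := by
      simp [cycList]
    rw [h2, List.getLast?_concat] at h1
    exact (Option.some_inj.mp h1).symm
  subst hv
  -- a ∈ seg k 0
  obtain ⟨s0h, s0t, hseg⟩ := List.exists_cons_of_ne_nil (seg_ne_nil hk 0)
  have ha : a = s0h := by
    have : cycList k = s0h :: (s0t ++ Sum.inl 1 :: (seg k 1 ++ [Sum.inl 0])) := by
      rw [cycList, hseg]
      rfl
    rw [hl] at this
    exact (List.cons.inj this).1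
  have hamem : a ∈ seg k 0 := by rw [ha, hseg]; simp
  obtain ⟨j, haj⟩ := mem_seg.mp hamem
  have hadj : (GG k).Adj (Sum.inl 0) a := by
    refine adj_of_inl_ne 0 ?_
    rintro y hy
    rw [haj] at hy
    simp at hy
  refine ⟨Sum.inl 0, Walk.cons hadj p, ?_, ?_⟩
  · rw [Walk.cons_isCycle_iff]
    refine ⟨hp, ?_⟩
    intro hmem
    have := edge_last_head p hp hmem
    omega
  · simp only [Walk.length_cons]
    omega

/-- For every integer `δ ≥ 2`, the graph `K₂ + 3K_{δ−1}`
(the join of `K₂` with the disjoint union of three copies of `K_{δ−1}`)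
has `n = 3δ − 1` vertices, minimum degree `δ`, contains a Hamilton path
(so `p = n = 3δ − 1`), and has circumference `c = 2δ`. -/
theorem stmt_10 (δ : ℕ) (hδ : 2 ≤ δ) :
    Fintype.card (Fin 2 ⊕ Fin 3 × Fin (δ - 1)) = 3 * δ - 1 ∧
    @SimpleGraph.minDegree _
      (graphJoin (⊤ : SimpleGraph (Fin 2)) (threeCliques (δ - 1))) _
      (Classical.decRel _) = δ ∧
    (∃ (u v : Fin 2 ⊕ Fin 3 × Fin (δ - 1))
        (P : (graphJoin (⊤ : SimpleGraph (Fin 2)) (threeCliques (δ - 1))).Walk u v),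
      P.IsPath ∧ P.length + 1 = 3 * δ - 1) ∧
    (∃ (u : Fin 2 ⊕ Fin 3 × Fin (δ - 1))
        (C : (graphJoin (⊤ : SimpleGraph (Fin 2)) (threeCliques (δ - 1))).Walk u u),
      C.IsCycle ∧ C.length = 2 * δ) ∧
    (∀ (u : Fin 2 ⊕ Fin 3 × Fin (δ - 1))
        (C : (graphJoin (⊤ : SimpleGraph (Fin 2)) (threeCliques (δ - 1))).Walk u u),
      C.IsCycle → C.length ≤ 2 * δ) := by
  have hk : 1 ≤ δ - 1 := by omega
  refine ⟨?_, ?_, ?_, ?_, ?_⟩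
  · simp
    omega
  · rw [@minDeg (δ - 1) hk (Classical.decRel _)]
    omega
  · obtain ⟨u, v, P, hP, hlen⟩ := ham_exists (δ - 1)
    exact ⟨u, v, P, hP, by omega⟩
  · obtain ⟨u, C, hC, hlen⟩ := cyc_exists (δ - 1) hk
    exact ⟨u, C, hC, by omega⟩
  · intro u C hC
    have := cycle_bound (δ - 1) u C hC
    omega
end
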